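/- arXiv:2504.00301 — 3 statements merged into one kernel-verified Lean document; each statement's English description precedes it below -/
import Mathlib

section
/- Let (a,p) ∈ P^{2N} and let (y_k)_{k≥0} satisfy recurrence (R), where in addition the initial function y_0 satisfies: for every i ∈ {1,...,N} and every t ≥ 0 with y_0(t) ≥ a_i, the right derivative of y_0 at t is at least q_i. Then for every k ≥ 0 and every t ≥ 0, y_k^−(t) ≤ y_k(t) ≤ y_k^+(t). -/
open Filter Topology
open scoped Classical

noncomputable section

/-- The positive part `x₊ = max x 0` of a real number. -/
def pos' (x : ℝ) : ℝ := max x 0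

/-- `qq p i = p 1 + ... + p i` (so `qq p 0 = 0`). -/
def qq (p : ℕ → ℝ) (i : ℕ) : ℝ := ∑ j ∈ Finset.Icc 1 i, p j

/-- `dpar a i = a i - a (i-1)`, with the convention `a 0 = 0`. -/
def dpar (a : ℕ → ℝ) (i : ℕ) : ℝ := if i = 1 then a 1 else a i - a (i - 1)

/-- `(a, p)` is a parameter tuple in `P^{2N}`:
`0 < a 1 < a 2 < ... < a N` and `p 1, ..., p N > 0`. -/
def IsParam (N : ℕ) (a p : ℕ → ℝ) : Prop :=
  0 < a 1 ∧ (∀ i, 1 ≤ i → i < N → a i < a (i + 1)) ∧ (∀ i, 1 ≤ i → i ≤ N → 0 < p i)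

/-- `s` is a stationary tuple for the parameters `(a, p)`:
`0 < s 1 < ... < s N` and `a i = ∑_{j=1}^N p j * (s i - s j + s 1)₊` for `1 ≤ i ≤ N`. -/
def IsStationaryTuple (N : ℕ) (a p s : ℕ → ℝ) : Prop :=
  0 < s 1 ∧ (∀ i, 1 ≤ i → i < N → s i < s (i + 1)) ∧
  ∀ i, 1 ≤ i → i ≤ N → a i = ∑ j ∈ Finset.Icc 1 N, p j * pos' (s i - s j + s 1)

/-- The inverse of (the restriction to `[0, ∞)` of) a function `y : ℝ → ℝ`. -/
def tinv (y : ℝ → ℝ) (x : ℝ) : ℝ := Function.invFunOn y (Set.Ici 0) x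

/-- The right derivative of `y` at `t` (the derivative of `y` at `t` within `[t, ∞)`). -/
def rD (y : ℝ → ℝ) (t : ℝ) : ℝ := derivWithin y (Set.Ici t) t

/-- The sequence `(y k)` satisfies recurrence (R).  The condition on the initial function `y 0`
(continuous, piecewise linear with at most `N` points of non-differentiability, vanishing at `0`,
with non-decreasing right derivative taking values in `{q 1, ..., q N}`) is encoded through its
canonical representation: such functions are exactly those of the form
`t ↦ ∑_{j=1}^N p j * (t - c j)₊` with `c` non-negative, non-decreasing and `c 1 = 0`. -/
def SatisfiesR (N : ℕ) (a p : ℕ → ℝ) (y : ℕ → ℝ → ℝ) : Prop :=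
  (∃ c : ℕ → ℝ, c 1 = 0 ∧ (∀ j, 1 ≤ j → j ≤ N → 0 ≤ c j) ∧
      (∀ j, 1 ≤ j → j < N → c j ≤ c (j + 1)) ∧
      ∀ t : ℝ, 0 ≤ t → y 0 t = ∑ j ∈ Finset.Icc 1 N, p j * pos' (t - c j)) ∧
  ∀ k : ℕ, ∀ t : ℝ, 0 ≤ t →
    y (k + 1) t = ∑ j ∈ Finset.Icc 1 N, p j * pos' (t - tinv (y k) (a j) + tinv (y k) (a 1))

/-- The breakpoints `c j` of the lower bounding trajectory `y₀⁻`: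
`c 1 = 0` and `c j = d 1 / q 1 + ∑_{l=2}^j d l / q (l-1)` for `j ≥ 2`. -/
def cminus (a p : ℕ → ℝ) (j : ℕ) : ℝ :=
  if j ≤ 1 then 0
  else a 1 / qq p 1 + ∑ l ∈ Finset.Icc 2 j, (a l - a (l - 1)) / qq p (l - 1)

/-- The lower bounding initial trajectory `y₀⁻`. -/
def yminus0 (N : ℕ) (a p : ℕ → ℝ) : ℝ → ℝ :=
  fun t => ∑ j ∈ Finset.Icc 1 N, p j * pos' (t - cminus a p j)

/-- The upper bounding initial trajectory `y₀⁺ : t ↦ q N * t`. -/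
def yplus0 (N : ℕ) (p : ℕ → ℝ) : ℝ → ℝ := fun t => qq p N * t

/-- The sequence satisfying recurrence (R) with prescribed initial term `y0`. -/
def iterR (N : ℕ) (a p : ℕ → ℝ) (y0 : ℝ → ℝ) : ℕ → ℝ → ℝ
  | 0 => y0
  | k + 1 => fun t =>
      ∑ j ∈ Finset.Icc 1 N,
        p j * pos' (t - tinv (iterR N a p y0 k) (a j) + tinv (iterR N a p y0 k) (a 1))

/-- `y` is a stationary trajectory: an increasing bijection of `[0,∞)` satisfying the
fixed-point equation of recurrence (R). -/
def IsStatTraj (N : ℕ) (a p : ℕ → ℝ) (y : ℝ → ℝ) : Prop :=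
  StrictMonoOn y (Set.Ici 0) ∧ Set.BijOn y (Set.Ici 0) (Set.Ici 0) ∧
  ∀ t : ℝ, 0 ≤ t → y t = ∑ j ∈ Finset.Icc 1 N, p j * pos' (t - tinv y (a j) + tinv y (a 1))

/-- `E_N`: the set of pairs `(i, j)` with `1 ≤ i < j ≤ N`. -/
def ENfin (N : ℕ) : Finset (ℕ × ℕ) :=
  (Finset.Icc 1 N ×ˢ Finset.Icc 1 N).filter fun e => e.1 < e.2

/-- `Nested e e'` means `e ≼_E e'`, i.e. `e` is nested in `e'`. -/
def Nested (e e' : ℕ × ℕ) : Prop := e'.1 ≤ e.1 ∧ e.1 < e.2 ∧ e.2 ≤ e'.2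

/-- `E` is the edge set of a downward closed graph on `{1, ..., N}`. -/
def IsDCGraph (N : ℕ) (E : Finset (ℕ × ℕ)) : Prop :=
  E ⊆ ENfin N ∧ ∀ e ∈ E, ∀ e' : ℕ × ℕ, Nested e' e → e' ∈ E

/-- `bG E i` is the greatest `j > i` with `(i, j) ∈ E`, and `i` if there is no such `j`;
by convention `bG E 0 = 1`. -/
def bG (E : Finset (ℕ × ℕ)) (i : ℕ) : ℕ :=
  if i = 0 then 1 else max i ((E.filter fun e => e.1 = i).sup fun e => e.2)

/-- `m(G)`: the maximal elements of `E` for `≼_E`. -/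
def maxE (E : Finset (ℕ × ℕ)) : Finset (ℕ × ℕ) :=
  E.filter fun e => ∀ e' ∈ E, Nested e e' → e' = e

/-- `M(G)`: the minimal elements of `E_N \ E` for `≼_E`. -/
def minNE (N : ℕ) (E : Finset (ℕ × ℕ)) : Finset (ℕ × ℕ) :=
  (ENfin N \ E).filter fun e => ∀ e' ∈ ENfin N \ E, Nested e' e → e' = e

/-- The map `T(G) : ℝ^N → ℝ^N`. -/
def TG (a p : ℕ → ℝ) (E : Finset (ℕ × ℕ)) (s : ℕ → ℝ) (i : ℕ) : ℝ :=
  (1 / qq p (bG E i)) * (a i + ∑ j ∈ Finset.Icc 1 (bG E i), p j * (s j - s 1))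

/-- The product of `γ` over the consecutive pairs (edges) of a list of vertices. -/
def pathProd (γ : ℕ → ℕ → ℝ) (l : List ℕ) : ℝ := (List.zipWith γ l l.tail).prod

/-- `Γ i j`: the sum, over all directed paths from `i` to `j` using edges of `E`, of the
product of `γ` over the edges of the path.  Since all edges of a DC graph increase, a directed
path from `i` to `j` is identified with the set `S ⊆ (i, j)` of its intermediate vertices,
subject to consecutive vertices being joined by edges of `E`. -/
def GammaPath (E : Finset (ℕ × ℕ)) (γ : ℕ → ℕ → ℝ) (i j : ℕ) : ℝ :=
  if i = j then 1
  else if i < j then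
    ∑ S ∈ (Finset.Ioo i j).powerset,
      if List.Chain' (fun u v => (u, v) ∈ E) (Finset.sort (insert i (insert j S)) (· ≤ ·))
      then pathProd γ (Finset.sort (insert i (insert j S)) (· ≤ ·)) else 0
  else 0

/-- The edge weight `γ^G_{i,j}`. -/
def gammaG (p : ℕ → ℝ) (E : Finset (ℕ × ℕ)) (i j : ℕ) : ℝ :=
  (qq p (bG E i) - qq p (max (j - 1) (bG E (i - 1)))) / qq p (bG E (i - 1))

/-- `Γ^G_{i,j}`. -/
def GammaG (p : ℕ → ℝ) (E : Finset (ℕ × ℕ)) (i j : ℕ) : ℝ := GammaPath E (gammaG p E) i j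

/-- `z_1^G (a, p)`. -/
def z1G (N : ℕ) (a p : ℕ → ℝ) (E : Finset (ℕ × ℕ)) : ℝ :=
  (∑ j ∈ Finset.Icc 1 N, GammaG p E 1 j * dpar a j / qq p (bG E (j - 1))) /
  (1 + ∑ j ∈ Finset.Icc 1 N,
      GammaG p E 1 j * (qq p (bG E j) - qq p (bG E (j - 1))) / qq p (bG E (j - 1)))

/-- `z_i^G (a, p)`. -/
def zG (N : ℕ) (a p : ℕ → ℝ) (E : Finset (ℕ × ℕ)) (i : ℕ) : ℝ :=
  if i = 1 then z1G N a p E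
  else
    (∑ j ∈ Finset.Icc i N, GammaG p E i j * dpar a j / qq p (bG E (j - 1))) -
      z1G N a p E *
        ∑ j ∈ Finset.Icc i N,
          GammaG p E i j * (qq p (bG E j) - qq p (bG E (j - 1))) / qq p (bG E (j - 1))

/-- `Z^G_{i,j} (a, p) = z_{i+1}^G + ... + z_j^G`. -/
def ZG (N : ℕ) (a p : ℕ → ℝ) (E : Finset (ℕ × ℕ)) (i j : ℕ) : ℝ :=
  ∑ l ∈ Finset.Icc (i + 1) j, zG N a p E l

/-- The DC graph `Gr(a, p)` read off from the stationary tuple `s = s(a, p)`: its edges are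
the pairs `(i, j) ∈ E_N` with `s 1 > s j - s i`. -/
def GrEdges (N : ℕ) (s : ℕ → ℝ) : Finset (ℕ × ℕ) :=
  (ENfin N).filter fun e => s e.2 - s e.1 < s 1

/-- `ζ` solves the linear system `S^G (a, p)`. -/
def SolvesS (N : ℕ) (a p : ℕ → ℝ) (E : Finset (ℕ × ℕ)) (ζ : ℕ → ℝ) : Prop :=
  ∀ i, 1 ≤ i → i ≤ N →
    a i = ∑ j ∈ Finset.Icc 1 (bG E i),
      p j * ((∑ l ∈ Finset.Icc 1 i, ζ l) - (∑ l ∈ Finset.Icc 1 j, ζ l) + ζ 1)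

/-- `P^{2N}`, viewed as a (cylinder) subset of the space of pairs of real sequences; only the
coordinates `a 1, ..., a N, p 1, ..., p N` are constrained. -/
def Pset (N : ℕ) : Set ((ℕ → ℝ) × (ℕ → ℝ)) := {ap | IsParam N ap.1 ap.2}

/-- The region `P_G = {(a, p) ∈ P^{2N} : Gr(a, p) = G}`. -/
def PGset (N : ℕ) (E : Finset (ℕ × ℕ)) : Set ((ℕ → ℝ) × (ℕ → ℝ)) :=
  {ap | IsParam N ap.1 ap.2 ∧ ∃ s : ℕ → ℝ, IsStationaryTuple N ap.1 ap.2 s ∧ GrEdges N s = E}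

/-- The boundary of `P_G` relative to `P^{2N}`.  Since `P^{2N}` is open, the closure of `P_G`
relative to `P^{2N}` is `closure (PGset N E) ∩ Pset N` and its relative interior is
`interior (PGset N E)`. -/
def relBoundary (N : ℕ) (E : Finset (ℕ × ℕ)) : Set ((ℕ → ℝ) × (ℕ → ℝ)) :=
  (closure (PGset N E) ∩ Pset N) \ interior (PGset N E)

/-- The trajectory `y^{(m)}` built from a tuple `s`:
`t ↦ ∑_{j=1}^N p j * (t - s j + s 1)₊`. -/
def trajOfS (N : ℕ) (p s : ℕ → ℝ) : ℝ → ℝ :=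
  fun t => ∑ j ∈ Finset.Icc 1 N, p j * pos' (t - s j + s 1)

/-- The DC graph `G^{(m)}` associated with a tuple `s`: its edges are the `(i, j) ∈ E_N` with
`t^{(m)} (a i) - s j + s 1 > 0`, where `t^{(m)}` is the inverse of `trajOfS N p s`. -/
def GrFromS (N : ℕ) (a p s : ℕ → ℝ) : Finset (ℕ × ℕ) :=
  (ENfin N).filter fun e => 0 < tinv (trajOfS N p s) (a e.1) - s e.2 + s 1

end

noncomputable section
namespace Stmt4

open Finset

variable {N : ℕ} {a p : ℕ → ℝ}

lemma pos'_nonneg (x : ℝ) : 0 ≤ pos' x := le_max_right _ _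
lemma pos'_mono : Monotone pos' := fun x y hxy => max_le_max hxy le_rfl
lemma pos'_of_nonneg {x : ℝ} (h : 0 ≤ x) : pos' x = x := max_eq_left h
lemma pos'_of_nonpos {x : ℝ} (h : x ≤ 0) : pos' x = 0 := max_eq_right h

lemma qq_succ (m : ℕ) : qq p (m + 1) = qq p m + p (m + 1) := by
  unfold qq
  rw [Finset.sum_Icc_succ_top (Nat.succ_le_succ (Nat.zero_le m))]

lemma qq_nonneg (hp : ∀ i, 1 ≤ i → i ≤ N → 0 < p i) {m : ℕ} (hm : m ≤ N) : 0 ≤ qq p m :=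
  Finset.sum_nonneg fun i hi => by
    rw [Finset.mem_Icc] at hi; exact (hp i hi.1 (hi.2.trans hm)).le

lemma qq_pos (hp : ∀ i, 1 ≤ i → i ≤ N → 0 < p i) {m : ℕ} (h1 : 1 ≤ m) (hm : m ≤ N) :
    0 < qq p m := by
  have h2 : p 1 ≤ qq p m := by
    apply Finset.single_le_sum (f := p)
    · intro i hi; rw [Finset.mem_Icc] at hi; exact (hp i hi.1 (hi.2.trans hm)).le
    · exact Finset.mem_Icc.2 ⟨le_rfl, h1⟩
  linarith [hp 1 le_rfl (h1.trans hm)]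

lemma qq_mono (hp : ∀ i, 1 ≤ i → i ≤ N → 0 < p i) {m m' : ℕ} (h : m ≤ m') (hm' : m' ≤ N) :
    qq p m ≤ qq p m' := by
  apply Finset.sum_le_sum_of_subset_of_nonneg (Finset.Icc_subset_Icc le_rfl h)
  intro i hi _; rw [Finset.mem_Icc] at hi; exact (hp i hi.1 (hi.2.trans hm')).le

/-- The canonical trajectory with shift vector `T`. -/
def F (N : ℕ) (p T : ℕ → ℝ) (t : ℝ) : ℝ := ∑ j ∈ Finset.Icc 1 N, p j * pos' (t - T j)

/-- Admissible shift vectors. -/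
def Adm (N : ℕ) (T : ℕ → ℝ) : Prop :=
  T 1 = 0 ∧ ∀ j, 1 ≤ j → j < N → T j ≤ T (j + 1)

lemma Adm.monoOn {T : ℕ → ℝ} (hT : Adm N T) :
    ∀ i j, 1 ≤ i → i ≤ j → j ≤ N → T i ≤ T j := by
  intro i j h1 hij hj
  induction j with
  | zero => omega
  | succ n ih =>
    rcases Nat.eq_or_lt_of_le hij with h | h
    · rw [h]
    · have hin : i ≤ n := by omega
      exact (ih hin (by omega)).trans (hT.2 n (by omega) (by omega))

lemma Adm.nonneg {T : ℕ → ℝ} (hT : Adm N T) {j : ℕ} (h1 : 1 ≤ j) (hj : j ≤ N) : 0 ≤ T j :=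
  hT.1 ▸ hT.monoOn 1 j le_rfl h1 hj

/-- Heights: the value of the trajectory at its breakpoints. -/
def hh (N : ℕ) (p T : ℕ → ℝ) (j : ℕ) : ℝ := F N p T (T j)

lemma F_mono (hp : ∀ i, 1 ≤ i → i ≤ N → 0 < p i) {T : ℕ → ℝ} : Monotone (F N p T) := by
  intro s t hst
  apply Finset.sum_le_sum
  intro j hj; rw [Finset.mem_Icc] at hj
  exact mul_le_mul_of_nonneg_left (pos'_mono (by linarith)) (hp j hj.1 hj.2).le

lemma F_nonneg (hp : ∀ i, 1 ≤ i → i ≤ N → 0 < p i) {T : ℕ → ℝ} (t : ℝ) : 0 ≤ F N p T t :=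
  Finset.sum_nonneg fun j hj => by
    rw [Finset.mem_Icc] at hj
    exact mul_nonneg (hp j hj.1 hj.2).le (pos'_nonneg _)

lemma F_zero {T : ℕ → ℝ} (hT : Adm N T) : F N p T 0 = 0 :=
  Finset.sum_eq_zero fun j hj => by
    rw [Finset.mem_Icc] at hj
    rw [pos'_of_nonpos (by linarith [hT.nonneg hj.1 hj.2]), mul_zero]

lemma F_strictMonoOn (hN : 1 ≤ N) (hp : ∀ i, 1 ≤ i → i ≤ N → 0 < p i) {T : ℕ → ℝ}
    (hT : Adm N T) : StrictMonoOn (F N p T) (Set.Ici 0) := by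
  intro s hs t ht hst
  apply Finset.sum_lt_sum
  · intro j hj; rw [Finset.mem_Icc] at hj
    exact mul_le_mul_of_nonneg_left (pos'_mono (by linarith)) (hp j hj.1 hj.2).le
  · refine ⟨1, Finset.mem_Icc.2 ⟨le_rfl, hN⟩, ?_⟩
    have h1 : pos' (s - T 1) < pos' (t - T 1) := by
      rw [hT.1, sub_zero, sub_zero, pos'_of_nonneg hs, pos'_of_nonneg (le_trans hs hst.le)]
      exact hst
    exact mul_lt_mul_of_pos_left h1 (hp 1 le_rfl hN)

lemma F_continuous {T : ℕ → ℝ} : Continuous (F N p T) := by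
  apply continuous_finset_sum
  intro j _
  have : Continuous fun t : ℝ => max (t - T j) 0 :=
    (continuous_id.sub continuous_const).max continuous_const
  exact continuous_const.mul this

lemma F_exists_preimage (hN : 1 ≤ N) (hp : ∀ i, 1 ≤ i → i ≤ N → 0 < p i) {T : ℕ → ℝ}
    (hT : Adm N T) {v : ℝ} (hv : 0 ≤ v) : ∃ t, 0 ≤ t ∧ F N p T t = v := by
  have hp1 : 0 < p 1 := hp 1 le_rfl hN
  set b := v / p 1 with hb
  have hb0 : 0 ≤ b := div_nonneg hv hp1.le
  have h1 : v ≤ F N p T b := by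
    have h2 : p 1 * pos' (b - T 1) ≤ F N p T b := by
      apply Finset.single_le_sum (f := fun j => p j * pos' (b - T j))
      · intro j hj; rw [Finset.mem_Icc] at hj
        exact mul_nonneg (hp j hj.1 hj.2).le (pos'_nonneg _)
      · exact Finset.mem_Icc.2 ⟨le_rfl, hN⟩
    rw [hT.1, sub_zero, pos'_of_nonneg hb0, hb] at h2
    rwa [mul_div_cancel₀ v hp1.ne'] at h2
  have := intermediate_value_Icc hb0 (F_continuous (N := N) (p := p) (T := T)).continuousOn
  obtain ⟨t, ht, htv⟩ := this ⟨by rw [F_zero hT]; exact hv, h1⟩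
  exact ⟨t, ht.1, htv⟩

lemma tinv_spec (hN : 1 ≤ N) (hp : ∀ i, 1 ≤ i → i ≤ N → 0 < p i) {T : ℕ → ℝ}
    (hT : Adm N T) {v : ℝ} (hv : 0 ≤ v) :
    0 ≤ tinv (F N p T) v ∧ F N p T (tinv (F N p T) v) = v := by
  obtain ⟨t, ht0, htv⟩ := F_exists_preimage hN hp hT hv
  have hex : ∃ x ∈ Set.Ici (0:ℝ), F N p T x = v := ⟨t, ht0, htv⟩
  exact ⟨Function.invFunOn_mem hex, Function.invFunOn_eq hex⟩

lemma eq_tinv (hN : 1 ≤ N) (hp : ∀ i, 1 ≤ i → i ≤ N → 0 < p i) {T : ℕ → ℝ}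
    (hT : Adm N T) {v t : ℝ} (ht : 0 ≤ t) (htv : F N p T t = v) : tinv (F N p T) v = t := by
  have hv : 0 ≤ v := htv ▸ F_nonneg hp t
  obtain ⟨h0, he⟩ := tinv_spec hN hp hT hv
  exact (F_strictMonoOn hN hp hT).injOn h0 ht (he.trans htv.symm)

lemma tinv_congr (hN : 1 ≤ N) (hp : ∀ i, 1 ≤ i → i ≤ N → 0 < p i) {T : ℕ → ℝ}
    (hT : Adm N T) {g : ℝ → ℝ} (hg : Set.EqOn g (F N p T) (Set.Ici 0)) {v : ℝ} (hv : 0 ≤ v) :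
    tinv g v = tinv (F N p T) v := by
  obtain ⟨t, ht0, htv⟩ := F_exists_preimage hN hp hT hv
  have hex : ∃ x ∈ Set.Ici (0:ℝ), g x = v := ⟨t, ht0, by rw [hg ht0]; exact htv⟩
  have h1 : tinv g v ∈ Set.Ici (0:ℝ) := Function.invFunOn_mem hex
  have h2 : g (tinv g v) = v := Function.invFunOn_eq hex
  exact (eq_tinv hN hp hT h1 ((hg h1).symm.trans h2)).symm

end Stmt4
end

noncomputable section
namespace Stmt4
open Finset
variable {N : ℕ} {a p : ℕ → ℝ}

lemma sum_Icc_split (f : ℕ → ℝ) {m n : ℕ} (hmn : m ≤ n) :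
    ∑ j ∈ Finset.Icc 1 n, f j = ∑ j ∈ Finset.Icc 1 m, f j + ∑ j ∈ Finset.Icc (m+1) n, f j := by
  have e : ∀ k l : ℕ, Finset.Icc (k+1) l = Finset.Ioc k l := by
    intro k l; ext x; simp [Finset.mem_Icc, Finset.mem_Ioc]
  have e1 : ∀ l : ℕ, Finset.Icc 1 l = Finset.Ioc 0 l := fun l => e 0 l
  rw [e1, e1, e, ← Finset.sum_Ioc_consecutive f (Nat.zero_le m) hmn]

lemma hh_eq {T : ℕ → ℝ} (hT : Adm N T) {j : ℕ} (h1 : 1 ≤ j) (hj : j ≤ N) :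
    hh N p T j = qq p j * T j - ∑ l ∈ Finset.Icc 1 j, p l * T l := by
  unfold hh F
  rw [sum_Icc_split _ hj]
  have h2 : ∑ l ∈ Finset.Icc (j+1) N, p l * pos' (T j - T l) = 0 :=
    Finset.sum_eq_zero fun l hl => by
      rw [Finset.mem_Icc] at hl
      rw [pos'_of_nonpos (sub_nonpos.2 (hT.monoOn j l h1 (by omega) hl.2)), mul_zero]
  have h3 : ∑ l ∈ Finset.Icc 1 j, p l * pos' (T j - T l)
      = ∑ l ∈ Finset.Icc 1 j, (p l * T j - p l * T l) :=
    Finset.sum_congr rfl fun l hl => by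
      rw [Finset.mem_Icc] at hl
      rw [pos'_of_nonneg (sub_nonneg.2 (hT.monoOn l j hl.1 hl.2 hj)), mul_sub]
  rw [h2, add_zero, h3, Finset.sum_sub_distrib, ← Finset.sum_mul]
  rfl

lemma hh_one (hN : 1 ≤ N) {T : ℕ → ℝ} (hT : Adm N T) : hh N p T 1 = 0 := by
  rw [hh_eq hT le_rfl hN, Finset.Icc_self, Finset.sum_singleton, hT.1]
  unfold qq; rw [Finset.Icc_self, Finset.sum_singleton]; ring

lemma hh_pred {T : ℕ → ℝ} (hT : Adm N T) {j : ℕ} (hj : j + 1 ≤ N) :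
    hh N p T (j+1) = qq p j * T (j+1) - ∑ l ∈ Finset.Icc 1 j, p l * T l := by
  rw [hh_eq hT (Nat.succ_le_succ (Nat.zero_le j)) hj, qq_succ,
    Finset.sum_Icc_succ_top (Nat.succ_le_succ (Nat.zero_le j))]
  ring

lemma hh_mono (hp : ∀ i, 1 ≤ i → i ≤ N → 0 < p i) {T : ℕ → ℝ} (hT : Adm N T) {i j : ℕ}
    (h1 : 1 ≤ i) (hij : i ≤ j) (hj : j ≤ N) : hh N p T i ≤ hh N p T j :=
  F_mono hp (hT.monoOn i j h1 hij hj)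

lemma hh_nonneg (hp : ∀ i, 1 ≤ i → i ≤ N → 0 < p i) {T : ℕ → ℝ} (j : ℕ) : 0 ≤ hh N p T j :=
  F_nonneg hp _

lemma hh_succ_diff {T : ℕ → ℝ} (hT : Adm N T) {j : ℕ} (h1 : 1 ≤ j) (hj : j + 1 ≤ N) :
    hh N p T (j+1) = hh N p T j + qq p j * (T (j+1) - T j) := by
  rw [hh_pred hT hj, hh_eq hT h1 (by omega)]
  ring

lemma shift_le (hN : 1 ≤ N) (hp : ∀ i, 1 ≤ i → i ≤ N → 0 < p i) {T T' : ℕ → ℝ}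
    (hT : Adm N T) (hT' : Adm N T')
    (hhle : ∀ j, 1 ≤ j → j ≤ N → hh N p T j ≤ hh N p T' j) :
    ∀ j, 1 ≤ j → j ≤ N → T j ≤ T' j := by
  intro j
  induction j using Nat.strong_induction_on with
  | _ j ih =>
    intro h1 hj
    rcases eq_or_lt_of_le h1 with h | h
    · rw [← h, hT.1, hT'.1]
    · obtain ⟨m, rfl⟩ : ∃ m, j = m + 1 := ⟨j - 1, by omega⟩
      have hm1 : 1 ≤ m := by omega
      have hS : ∑ l ∈ Finset.Icc 1 m, p l * T l ≤ ∑ l ∈ Finset.Icc 1 m, p l * T' l :=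
        Finset.sum_le_sum fun l hl => by
          rw [Finset.mem_Icc] at hl
          exact mul_le_mul_of_nonneg_left (ih l (by omega) hl.1 (by omega))
            (hp l hl.1 (by omega)).le
      have e1 := hh_pred (p := p) hT (j := m) hj
      have e2 := hh_pred (p := p) hT' (j := m) hj
      have hq : 0 < qq p m := qq_pos hp hm1 (by omega)
      have h3 := hhle (m+1) h1 hj
      have h4 : qq p m * T (m+1) ≤ qq p m * T' (m+1) := by
        rw [e1, e2] at h3; linarith
      exact le_of_mul_le_mul_left h4 hq

lemma F_le (hN : 1 ≤ N) (hp : ∀ i, 1 ≤ i → i ≤ N → 0 < p i) {T T' : ℕ → ℝ}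
    (hT : Adm N T) (hT' : Adm N T')
    (hhle : ∀ j, 1 ≤ j → j ≤ N → hh N p T j ≤ hh N p T' j) (t : ℝ) :
    F N p T' t ≤ F N p T t :=
  Finset.sum_le_sum fun j hj => by
    rw [Finset.mem_Icc] at hj
    have := shift_le hN hp hT hT' hhle j hj.1 hj.2
    exact mul_le_mul_of_nonneg_left (pos'_mono (by linarith)) (hp j hj.1 hj.2).le

end Stmt4
end

noncomputable section
namespace Stmt4
open Finset
variable {N : ℕ} {a p : ℕ → ℝ}

/-- Explicit formula for the inverse trajectory. -/
def R (N : ℕ) (p T : ℕ → ℝ) (v : ℝ) : ℝ :=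
  v / qq p N + ∑ l ∈ Finset.Icc 1 (N-1), (1 / qq p l - 1 / qq p (l+1)) * min v (hh N p T (l+1))

lemma coeff_nonneg (hp : ∀ i, 1 ≤ i → i ≤ N → 0 < p i) {l : ℕ} (h1 : 1 ≤ l) (hl : l + 1 ≤ N) :
    0 ≤ 1 / qq p l - 1 / qq p (l+1) := by
  have h2 : 0 < qq p l := qq_pos hp h1 (by omega)
  have h3 : qq p l ≤ qq p (l+1) := qq_mono hp (by omega) hl
  have := one_div_le_one_div_of_le h2 h3
  linarith

lemma tele (g : ℕ → ℝ) : ∀ b a, a ≤ b + 1 →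
    ∑ l ∈ Finset.Icc a b, (g l - g (l+1)) = g a - g (b+1) := by
  intro b
  induction b with
  | zero =>
    intro a ha
    interval_cases a
    · rw [Finset.Icc_self, Finset.sum_singleton]
    · rw [Finset.Icc_eq_empty (by omega), Finset.sum_empty]; ring
  | succ n ih =>
    intro a ha
    rcases le_or_gt a (n+1) with h | h
    · rw [Finset.sum_Icc_succ_top h, ih a h]; ring
    · have : a = n + 2 := by omega
      subst this
      rw [Finset.Icc_eq_empty (by omega), Finset.sum_empty]; ring

lemma K_lemma (hN : 1 ≤ N) (hp : ∀ i, 1 ≤ i → i ≤ N → 0 < p i) {T : ℕ → ℝ} (hT : Adm N T) :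
    ∀ m, m + 1 ≤ N →
      ∑ l ∈ Finset.Icc 1 m, (1 / qq p l - 1 / qq p (l+1)) * hh N p T (l+1)
        = (∑ l ∈ Finset.Icc 1 (m+1), p l * T l) / qq p (m+1) := by
  intro m
  induction m with
  | zero =>
    intro _
    rw [Finset.Icc_eq_empty (by omega), Finset.sum_empty, Finset.Icc_self,
      Finset.sum_singleton, hT.1]
    simp
  | succ n ih =>
    intro hm
    rw [Finset.sum_Icc_succ_top (Nat.succ_le_succ (Nat.zero_le n)), ih (by omega)]
    have e1 := hh_pred (p := p) hT (j := n + 1) hm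
    have e2 : ∑ l ∈ Finset.Icc 1 (n+2), p l * T l
        = ∑ l ∈ Finset.Icc 1 (n+1), p l * T l + p (n+2) * T (n+2) :=
      Finset.sum_Icc_succ_top (by omega) _
    have e3 : qq p (n+2) = qq p (n+1) + p (n+2) := qq_succ (n+1)
    have hq1 : 0 < qq p (n+1) := qq_pos hp (by omega) (by omega)
    have hq2 : 0 < qq p (n+2) := qq_pos hp (by omega) hm
    have hne : qq p (n+1) + p (n+2) ≠ 0 := by rw [← qq_succ]; exact hq2.ne'
    rw [e1, e2, e3]
    field_simp
    ring
  
lemma R_mono (hp : ∀ i, 1 ≤ i → i ≤ N → 0 < p i) {T : ℕ → ℝ} {v w : ℝ} (hvw : v ≤ w) :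
    R N p T v ≤ R N p T w := by
  unfold R
  have hqN : 0 ≤ qq p N := qq_nonneg hp le_rfl
  apply add_le_add (div_le_div_of_nonneg_right hvw hqN)
  apply Finset.sum_le_sum
  intro l hl
  rw [Finset.mem_Icc] at hl
  exact mul_le_mul_of_nonneg_left (min_le_min hvw le_rfl) (coeff_nonneg hp hl.1 (by omega))

lemma R_nonneg (hp : ∀ i, 1 ≤ i → i ≤ N → 0 < p i) {T : ℕ → ℝ} {v : ℝ} (hv : 0 ≤ v) :
    0 ≤ R N p T v := by
  unfold R
  apply add_nonneg (div_nonneg hv (qq_nonneg hp le_rfl))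
  apply Finset.sum_nonneg
  intro l hl
  rw [Finset.mem_Icc] at hl
  exact mul_nonneg (coeff_nonneg hp hl.1 (by omega))
    (le_min hv (hh_nonneg hp _))

end Stmt4
end

noncomputable section
namespace Stmt4
open Finset
variable {N : ℕ} {a p : ℕ → ℝ}

lemma R_at_h (hN : 1 ≤ N) (hp : ∀ i, 1 ≤ i → i ≤ N → 0 < p i) {T : ℕ → ℝ} (hT : Adm N T)
    {j : ℕ} (h1 : 1 ≤ j) (hj : j ≤ N) : R N p T (hh N p T j) = T j := by
  obtain ⟨m, rfl⟩ : ∃ m, j = m + 1 := ⟨j - 1, by omega⟩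
  unfold R
  have hmN : m ≤ N - 1 := by omega
  rw [sum_Icc_split _ hmN]
  have e1 : ∑ l ∈ Finset.Icc 1 m, (1 / qq p l - 1 / qq p (l+1)) * min (hh N p T (m+1)) (hh N p T (l+1))
      = ∑ l ∈ Finset.Icc 1 m, (1 / qq p l - 1 / qq p (l+1)) * hh N p T (l+1) :=
    Finset.sum_congr rfl fun l hl => by
      rw [Finset.mem_Icc] at hl
      rw [min_eq_right (hh_mono hp hT (by omega) (by omega) hj)]
  have e2 : ∑ l ∈ Finset.Icc (m+1) (N-1), (1 / qq p l - 1 / qq p (l+1)) * min (hh N p T (m+1)) (hh N p T (l+1))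
      = ∑ l ∈ Finset.Icc (m+1) (N-1), (1 / qq p l - 1 / qq p (l+1)) * hh N p T (m+1) :=
    Finset.sum_congr rfl fun l hl => by
      rw [Finset.mem_Icc] at hl
      rw [min_eq_left (hh_mono hp hT h1 (by omega) (by omega))]
  rw [e1, e2, K_lemma hN hp hT m hj, ← Finset.sum_mul]
  have e3 : ∑ l ∈ Finset.Icc (m+1) (N-1), (1 / qq p l - 1 / qq p (l+1))
      = 1 / qq p (m+1) - 1 / qq p N := by
    rw [tele (fun l => 1 / qq p l) (N-1) (m+1) (by omega)]
    have eN : N - 1 + 1 = N := by omega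
    rw [eN]
  rw [e3]
  have e4 := hh_eq (p := p) hT h1 hj
  have hq1 : 0 < qq p (m+1) := qq_pos hp h1 hj
  have hqN : 0 < qq p N := qq_pos hp hN le_rfl
  rw [e4]
  field_simp
  ring

lemma F_R (hN : 1 ≤ N) (hp : ∀ i, 1 ≤ i → i ≤ N → 0 < p i) {T : ℕ → ℝ} (hT : Adm N T)
    {v : ℝ} (hv : 0 ≤ v) : F N p T (R N p T v) = v := by
  classical
  set E := (Finset.Icc 1 N).filter (fun l => hh N p T l ≤ v) with hE
  have h1E : (1:ℕ) ∈ E := by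
    rw [hE, Finset.mem_filter]
    exact ⟨Finset.mem_Icc.2 ⟨le_rfl, hN⟩, by rw [hh_one hN hT]; exact hv⟩
  have hEne : E.Nonempty := ⟨1, h1E⟩
  obtain ⟨m, hm⟩ : ∃ m, E.max' hEne = m := ⟨_, rfl⟩
  have hmE : m ∈ E := hm ▸ E.max'_mem hEne
  rw [hE, Finset.mem_filter, Finset.mem_Icc] at hmE
  have hm1 : 1 ≤ m := hmE.1.1
  have hmN : m ≤ N := hmE.1.2
  have hmv : hh N p T m ≤ v := hmE.2
  have hle : ∀ j, 1 ≤ j → j ≤ m → T j ≤ R N p T v := by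
    intro j hj1 hjm
    rw [← R_at_h hN hp hT hj1 (hjm.trans hmN)]
    exact R_mono hp ((hh_mono hp hT hj1 hjm hmN).trans hmv)
  have hgt : ∀ j, m < j → j ≤ N → v < hh N p T j := by
    intro j hmj hjN
    by_contra hcon
    push_neg at hcon
    have : j ∈ E := by
      rw [hE, Finset.mem_filter, Finset.mem_Icc]
      exact ⟨⟨by omega, hjN⟩, hcon⟩
    have h5 := Finset.le_max' E j this
    rw [hm] at h5
    omega
  have hge : ∀ j, m < j → j ≤ N → R N p T v ≤ T j := by
    intro j hmj hjN
    rw [← R_at_h hN hp hT (by omega) hjN]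
    exact R_mono hp (hgt j hmj hjN).le
  -- compute R v explicitly
  obtain ⟨m', rfl⟩ : ∃ m', m = m' + 1 := ⟨m - 1, by omega⟩
  have hRv : R N p T v = (v + ∑ l ∈ Finset.Icc 1 (m'+1), p l * T l) / qq p (m'+1) := by
    unfold R
    rw [sum_Icc_split _ (show m' ≤ N - 1 by omega)]
    have e1 : ∑ l ∈ Finset.Icc 1 m', (1 / qq p l - 1 / qq p (l+1)) * min v (hh N p T (l+1))
        = ∑ l ∈ Finset.Icc 1 m', (1 / qq p l - 1 / qq p (l+1)) * hh N p T (l+1) :=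
      Finset.sum_congr rfl fun l hl => by
        rw [Finset.mem_Icc] at hl
        exact by rw [min_eq_right ((hh_mono hp hT (by omega) (by omega) hmN).trans hmv)]
    have e2 : ∑ l ∈ Finset.Icc (m'+1) (N-1), (1 / qq p l - 1 / qq p (l+1)) * min v (hh N p T (l+1))
        = ∑ l ∈ Finset.Icc (m'+1) (N-1), (1 / qq p l - 1 / qq p (l+1)) * v :=
      Finset.sum_congr rfl fun l hl => by
        rw [Finset.mem_Icc] at hl
        exact by rw [min_eq_left (hgt (l+1) (by omega) (by omega)).le]
    rw [e1, e2, K_lemma hN hp hT m' (by omega), ← Finset.sum_mul]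
    rw [tele (fun l => 1 / qq p l) (N-1) (m'+1) (by omega)]
    have hq1 : 0 < qq p (m'+1) := qq_pos hp (by omega) hmN
    have hqN : 0 < qq p N := qq_pos hp hN le_rfl
    have eN : N - 1 + 1 = N := by omega
    rw [eN]
    field_simp
    ring
  unfold F
  rw [sum_Icc_split _ hmN]
  have z2 : ∑ j ∈ Finset.Icc (m'+1+1) N, p j * pos' (R N p T v - T j) = 0 :=
    Finset.sum_eq_zero fun j hj => by
      rw [Finset.mem_Icc] at hj
      rw [pos'_of_nonpos (sub_nonpos.2 (hge j (by omega) hj.2)), mul_zero]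
  have z1 : ∑ j ∈ Finset.Icc 1 (m'+1), p j * pos' (R N p T v - T j)
      = ∑ j ∈ Finset.Icc 1 (m'+1), (p j * R N p T v - p j * T j) :=
    Finset.sum_congr rfl fun j hj => by
      rw [Finset.mem_Icc] at hj
      rw [pos'_of_nonneg (sub_nonneg.2 (hle j hj.1 hj.2)), mul_sub]
  rw [z1, z2, add_zero, Finset.sum_sub_distrib, ← Finset.sum_mul]
  have hq1 : 0 < qq p (m'+1) := qq_pos hp (by omega) hmN
  rw [hRv]
  show qq p (m'+1) * _ - _ = v
  field_simp
  ring

lemma tinv_F_eq_R (hN : 1 ≤ N) (hp : ∀ i, 1 ≤ i → i ≤ N → 0 < p i) {T : ℕ → ℝ} (hT : Adm N T)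
    {v : ℝ} (hv : 0 ≤ v) : tinv (F N p T) v = R N p T v :=
  eq_tinv hN hp hT (R_nonneg hp hv) (F_R hN hp hT hv)

lemma min_ineq {v w x y : ℝ} (hvw : v ≤ w) (hxy : x ≤ y) :
    min w x - min v x ≤ min w y - min v y := by
  simp only [min_def]
  split_ifs <;> linarith

lemma tinv_diff_le (hN : 1 ≤ N) (hp : ∀ i, 1 ≤ i → i ≤ N → 0 < p i) {T T' : ℕ → ℝ}
    (hT : Adm N T) (hT' : Adm N T')
    (hhle : ∀ j, 1 ≤ j → j ≤ N → hh N p T j ≤ hh N p T' j)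
    {v w : ℝ} (hv : 0 ≤ v) (hvw : v ≤ w) :
    tinv (F N p T) w - tinv (F N p T) v ≤ tinv (F N p T') w - tinv (F N p T') v := by
  have hw : 0 ≤ w := hv.trans hvw
  rw [tinv_F_eq_R hN hp hT hv, tinv_F_eq_R hN hp hT hw,
    tinv_F_eq_R hN hp hT' hv, tinv_F_eq_R hN hp hT' hw]
  unfold R
  have key : ∑ l ∈ Finset.Icc 1 (N-1), ((1 / qq p l - 1 / qq p (l+1)) * min w (hh N p T (l+1))
        - (1 / qq p l - 1 / qq p (l+1)) * min v (hh N p T (l+1)))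
      ≤ ∑ l ∈ Finset.Icc 1 (N-1), ((1 / qq p l - 1 / qq p (l+1)) * min w (hh N p T' (l+1))
        - (1 / qq p l - 1 / qq p (l+1)) * min v (hh N p T' (l+1))) := by
    apply Finset.sum_le_sum
    intro l hl
    rw [Finset.mem_Icc] at hl
    rw [← mul_sub, ← mul_sub]
    exact mul_le_mul_of_nonneg_left (min_ineq hvw (hhle (l+1) (by omega) (by omega)))
      (coeff_nonneg hp hl.1 (by omega))
  rw [Finset.sum_sub_distrib, Finset.sum_sub_distrib] at key
  linarith

end Stmt4
end

noncomputable section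
namespace Stmt4
open Finset
variable {N : ℕ} {a p : ℕ → ℝ}

lemma a_mono (ha : IsParam N a p) : ∀ i j, 1 ≤ i → i ≤ j → j ≤ N → a i ≤ a j := by
  intro i j h1 hij hj
  induction j with
  | zero => omega
  | succ n ih =>
    rcases Nat.eq_or_lt_of_le hij with h | h
    · rw [h]
    · exact (ih (by omega) (by omega)).trans (ha.2.1 n (by omega) (by omega)).le

lemma a_pos (ha : IsParam N a p) {i : ℕ} (h1 : 1 ≤ i) (hi : i ≤ N) : 0 < a i :=
  lt_of_lt_of_le ha.1 (a_mono ha 1 i le_rfl h1 hi)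

/-- The next shift vector in the recurrence. -/
def nextT (N : ℕ) (a p T : ℕ → ℝ) (j : ℕ) : ℝ :=
  tinv (F N p T) (a j) - tinv (F N p T) (a 1)

/-- The sequence of shift vectors. -/
def Tseq (N : ℕ) (a p T0 : ℕ → ℝ) : ℕ → ℕ → ℝ
  | 0 => T0
  | k + 1 => nextT N a p (Tseq N a p T0 k)

lemma Adm_nextT (hN : 1 ≤ N) (ha : IsParam N a p) {T : ℕ → ℝ} (hT : Adm N T) :
    Adm N (nextT N a p T) := by
  have hp := ha.2.2
  constructor
  · unfold nextT; exact sub_self _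
  · intro j h1 hj
    unfold nextT
    have h2 : tinv (F N p T) (a j) ≤ tinv (F N p T) (a (j+1)) := by
      rw [tinv_F_eq_R hN hp hT (a_pos ha h1 (by omega)).le,
        tinv_F_eq_R hN hp hT (a_pos ha (by omega) (by omega)).le]
      exact R_mono hp (ha.2.1 j h1 hj).le
    linarith

lemma hh_nextT_eq (hN : 1 ≤ N) (ha : IsParam N a p) {T : ℕ → ℝ} (hT : Adm N T)
    {j : ℕ} (h1 : 1 ≤ j) (hj : j ≤ N) :
    hh N p (nextT N a p T) j
      = ∑ l ∈ Finset.Icc 1 j, p l * (tinv (F N p T) (a j) - tinv (F N p T) (a l)) := by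
  rw [hh_eq (Adm_nextT hN ha hT) h1 hj]
  unfold qq nextT
  rw [Finset.sum_mul, ← Finset.sum_sub_distrib]
  exact Finset.sum_congr rfl fun l hl => by ring

lemma hh_nextT_le (hN : 1 ≤ N) (ha : IsParam N a p) {T T' : ℕ → ℝ}
    (hT : Adm N T) (hT' : Adm N T')
    (hhle : ∀ j, 1 ≤ j → j ≤ N → hh N p T j ≤ hh N p T' j) :
    ∀ j, 1 ≤ j → j ≤ N → hh N p (nextT N a p T) j ≤ hh N p (nextT N a p T') j := by
  have hp := ha.2.2
  intro j h1 hj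
  rw [hh_nextT_eq hN ha hT h1 hj, hh_nextT_eq hN ha hT' h1 hj]
  apply Finset.sum_le_sum
  intro l hl
  rw [Finset.mem_Icc] at hl
  apply mul_le_mul_of_nonneg_left _ (hp l hl.1 (hl.2.trans hj)).le
  exact tinv_diff_le hN hp hT hT' hhle (a_pos ha hl.1 (hl.2.trans hj)).le
    (a_mono ha l j hl.1 hl.2 hj)

lemma Adm_Tseq (hN : 1 ≤ N) (ha : IsParam N a p) {T0 : ℕ → ℝ} (hT0 : Adm N T0) :
    ∀ k, Adm N (Tseq N a p T0 k) := by
  intro k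
  induction k with
  | zero => exact hT0
  | succ k ih => exact Adm_nextT hN ha ih

lemma hh_Tseq_le (hN : 1 ≤ N) (ha : IsParam N a p) {T0 T0' : ℕ → ℝ}
    (hT0 : Adm N T0) (hT0' : Adm N T0')
    (hhle : ∀ j, 1 ≤ j → j ≤ N → hh N p T0 j ≤ hh N p T0' j) :
    ∀ k j, 1 ≤ j → j ≤ N → hh N p (Tseq N a p T0 k) j ≤ hh N p (Tseq N a p T0' k) j := by
  intro k
  induction k with
  | zero => exact hhle
  | succ k ih =>
    exact hh_nextT_le hN ha (Adm_Tseq hN ha hT0 k) (Adm_Tseq hN ha hT0' k) ih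

lemma step_eq (hN : 1 ≤ N) (ha : IsParam N a p) {T : ℕ → ℝ} (hT : Adm N T)
    {g : ℝ → ℝ} (hg : Set.EqOn g (F N p T) (Set.Ici 0)) (t : ℝ) :
    ∑ j ∈ Finset.Icc 1 N, p j * pos' (t - tinv g (a j) + tinv g (a 1))
      = F N p (nextT N a p T) t := by
  have hp := ha.2.2
  apply Finset.sum_congr rfl
  intro j hj
  rw [Finset.mem_Icc] at hj
  rw [tinv_congr hN hp hT hg (a_pos ha hj.1 hj.2).le,
    tinv_congr hN hp hT hg (a_pos ha le_rfl hN).le]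
  have e : t - tinv (F N p T) (a j) + tinv (F N p T) (a 1) = t - nextT N a p T j := by
    unfold nextT; ring
  rw [e]

lemma iter_eq (hN : 1 ≤ N) (ha : IsParam N a p) {y0 : ℝ → ℝ} {T0 : ℕ → ℝ} (hT0 : Adm N T0)
    (h0 : Set.EqOn y0 (F N p T0) (Set.Ici 0)) :
    ∀ k, Set.EqOn (iterR N a p y0 k) (F N p (Tseq N a p T0 k)) (Set.Ici 0) := by
  intro k
  induction k with
  | zero => exact h0
  | succ k ih =>
    intro t ht
    have e1 : iterR N a p y0 (k+1) t
        = ∑ j ∈ Finset.Icc 1 N, p j * pos' (t - tinv (iterR N a p y0 k) (a j)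
            + tinv (iterR N a p y0 k) (a 1)) := rfl
    rw [e1, step_eq hN ha (Adm_Tseq hN ha hT0 k) ih t]
    rfl

end Stmt4
end

noncomputable section
namespace Stmt4
open Finset
variable {N : ℕ} {a p : ℕ → ℝ}

lemma cminus_one : cminus a p 1 = 0 := by simp [cminus]

lemma cminus_two : cminus a p 2 = a 1 / qq p 1 + (a 2 - a 1) / qq p 1 := by
  rw [cminus]
  norm_num

lemma cminus_succ {j : ℕ} (h2 : 2 ≤ j) :
    cminus a p (j+1) = cminus a p j + (a (j+1) - a j) / qq p j := by
  rw [cminus, cminus, if_neg (by omega), if_neg (by omega),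
    Finset.sum_Icc_succ_top (by omega : 2 ≤ j + 1)]
  simp only [Nat.add_sub_cancel]
  ring

lemma Adm_cminus (hN : 1 ≤ N) (ha : IsParam N a p) : Adm N (cminus a p) := by
  have hp := ha.2.2
  refine ⟨cminus_one, ?_⟩
  intro j h1 hj
  rcases eq_or_lt_of_le h1 with h | h
  · have hj1 : j = 1 := h.symm
    subst hj1
    rw [cminus_one, cminus_two]
    have hq : 0 < qq p 1 := qq_pos hp le_rfl hN
    have ha1 : 0 < a 1 := ha.1
    have ha2 : a 1 < a 2 := ha.2.1 1 le_rfl (by omega)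
    have h5 : 0 ≤ a 1 / qq p 1 := div_nonneg ha1.le hq.le
    have h6 : 0 ≤ (a 2 - a 1) / qq p 1 := div_nonneg (by linarith) hq.le
    linarith
  · rw [cminus_succ (by omega)]
    have hq : 0 < qq p j := qq_pos hp h1 (by omega)
    have haj : a j ≤ a (j+1) := (ha.2.1 j h1 hj).le
    have : 0 ≤ (a (j+1) - a j) / qq p j := div_nonneg (by linarith) hq.le
    linarith

lemma hh_cminus (hN : 1 ≤ N) (ha : IsParam N a p) :
    ∀ j, 2 ≤ j → j ≤ N → hh N p (cminus a p) j = a j := by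
  have hp := ha.2.2
  have hC := Adm_cminus hN ha
  intro j
  induction j with
  | zero => omega
  | succ n ih =>
    intro h2 hj
    rcases eq_or_lt_of_le h2 with h | h
    · have hn : n = 1 := by omega
      subst hn
      rw [hh_succ_diff hC le_rfl hj, hh_one hN hC, cminus_one, cminus_two]
      have hq : 0 < qq p 1 := qq_pos hp le_rfl hN
      field_simp
      ring
    · have hn2 : 2 ≤ n := by omega
      rw [hh_succ_diff hC (by omega) hj, ih hn2 (by omega), cminus_succ hn2]
      have hq : 0 < qq p n := qq_pos hp (by omega) (by omega)
      field_simp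
      ring

lemma heights_le_a (hN : 1 ≤ N) (ha : IsParam N a p) {c : ℕ → ℝ} (hc : Adm N c)
    {y0 : ℝ → ℝ} (hy0 : Set.EqOn y0 (F N p c) (Set.Ici 0))
    (hsp : ∀ i, 1 ≤ i → i ≤ N → ∀ t : ℝ, 0 ≤ t → a i ≤ y0 t → qq p i ≤ rD y0 t) :
    ∀ i, 1 ≤ i → i ≤ N → hh N p c i ≤ a i := by
  have hp := ha.2.2
  intro i h1 hi
  by_contra hcon
  push_neg at hcon
  have hai : (0:ℝ) ≤ a i := (a_pos ha h1 hi).le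
  obtain ⟨ht0, htv⟩ := tinv_spec hN hp hc hai
  set t := tinv (F N p c) (a i) with htdef
  have htci : t < c i := by
    by_contra hge
    push_neg at hge
    have h2 : F N p c (c i) ≤ F N p c t := F_mono hp hge
    rw [htv] at h2
    exact absurd h2 (not_le.2 hcon)
  classical
  set B := (Finset.Icc 1 N).filter (fun j => t < c j) with hB
  have hiB : i ∈ B := by
    rw [hB, Finset.mem_filter]
    exact ⟨Finset.mem_Icc.2 ⟨h1, hi⟩, htci⟩
  have hBne : B.Nonempty := ⟨i, hiB⟩
  have hBine : (B.image (fun j => c j - t)).Nonempty := hBne.image _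
  set δ := (B.image (fun j => c j - t)).min' hBine with hδ
  have hδpos : 0 < δ := by
    have hmem := Finset.min'_mem _ hBine
    rw [Finset.mem_image] at hmem
    obtain ⟨j, hjB, hje⟩ := hmem
    rw [hB, Finset.mem_filter] at hjB
    rw [hδ, ← hje]
    linarith [hjB.2]
  have hδle : ∀ j ∈ B, δ ≤ c j - t := fun j hj =>
    Finset.min'_le _ _ (Finset.mem_image_of_mem _ hj)
  set m := ∑ j ∈ (Finset.Icc 1 N).filter (fun j => c j ≤ t), p j with hm
  have hlin : ∀ s, t ≤ s → s < t + δ → F N p c s = F N p c t + m * (s - t) := by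
    intro s hs1 hs2
    have hterm : ∀ j ∈ Finset.Icc 1 N, p j * pos' (s - c j)
        = p j * pos' (t - c j) + (if c j ≤ t then p j else 0) * (s - t) := by
      intro j hj
      by_cases hcj : c j ≤ t
      · rw [if_pos hcj, pos'_of_nonneg (by linarith), pos'_of_nonneg (by linarith)]
        ring
      · rw [if_neg hcj]
        push_neg at hcj
        have hjB : j ∈ B := by rw [hB, Finset.mem_filter]; exact ⟨hj, hcj⟩
        have hsj : s ≤ c j := by have := hδle j hjB; linarith
        rw [pos'_of_nonpos (by linarith), pos'_of_nonpos (by linarith)]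
        ring
    calc F N p c s = ∑ j ∈ Finset.Icc 1 N,
          (p j * pos' (t - c j) + (if c j ≤ t then p j else 0) * (s - t)) :=
        Finset.sum_congr rfl hterm
      _ = F N p c t + (∑ j ∈ Finset.Icc 1 N, if c j ≤ t then p j else 0) * (s - t) := by
        rw [Finset.sum_add_distrib, ← Finset.sum_mul]; rfl
      _ = F N p c t + m * (s - t) := by rw [hm, Finset.sum_filter]
  have hmem : Set.Ico t (t + δ) ∈ nhdsWithin t (Set.Ici t) := by
    have h3 : Set.Iio (t + δ) ∈ nhds t := Iio_mem_nhds (by linarith)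
    have h4 : Set.Ici t ∩ Set.Iio (t + δ) ∈ nhdsWithin t (Set.Ici t) :=
      Filter.inter_mem self_mem_nhdsWithin (mem_nhdsWithin_of_mem_nhds h3)
    rwa [Set.Ici_inter_Iio] at h4
  have hEq : y0 =ᶠ[nhdsWithin t (Set.Ici t)] fun s => F N p c t + m * (s - t) := by
    filter_upwards [hmem] with s hs
    rw [hy0 (Set.mem_Ici.2 (le_trans ht0 hs.1)), hlin s hs.1 hs.2]
  have hD : HasDerivWithinAt (fun s => F N p c t + m * (s - t)) m (Set.Ici t) t := by
    have h5 : HasDerivAt (fun s : ℝ => F N p c t + m * (s - t)) m t := by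
      simpa using (((hasDerivAt_id t).sub_const t).const_mul m).const_add (F N p c t)
    exact h5.hasDerivWithinAt
  have hrD : rD y0 t = m := by
    unfold rD
    rw [Filter.EventuallyEq.derivWithin_eq hEq (by rw [hy0 (Set.mem_Ici.2 ht0)]; ring)]
    exact hD.derivWithin (uniqueDiffOn_Ici t t Set.self_mem_Ici)
  have hsub : (Finset.Icc 1 N).filter (fun j => c j ≤ t) ⊆ Finset.Icc 1 (i-1) := by
    intro j hj
    rw [Finset.mem_filter, Finset.mem_Icc] at hj
    rw [Finset.mem_Icc]
    refine ⟨hj.1.1, ?_⟩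
    by_contra hcon2
    push_neg at hcon2
    have hij : i ≤ j := by omega
    have : c i ≤ c j := hc.monoOn i j h1 hij hj.1.2
    linarith [hj.2]
  have hmq : m ≤ qq p (i-1) := by
    rw [hm]
    apply Finset.sum_le_sum_of_subset_of_nonneg hsub
    intro j hj _
    rw [Finset.mem_Icc] at hj
    exact (hp j hj.1 (by omega)).le
  have happ := hsp i h1 hi t ht0 (by rw [hy0 (Set.mem_Ici.2 ht0)]; rw [htv])
  have hqi : qq p (i-1) < qq p i := by
    obtain ⟨i', rfl⟩ : ∃ i', i = i' + 1 := ⟨i - 1, by omega⟩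
    rw [qq_succ]
    simp only [Nat.add_sub_cancel]
    linarith [hp (i'+1) (by omega) hi]
  rw [hrD] at happ
  linarith

end Stmt4
end

open Stmt4 in
/-- bounding trajectories, Proposition 3.6 of the paper. -/
theorem stmt_4 (N : ℕ) (hN : 1 ≤ N) (a p : ℕ → ℝ) (hap : IsParam N a p)
    (y : ℕ → ℝ → ℝ) (hy : SatisfiesR N a p y)
    (hsp : ∀ i, 1 ≤ i → i ≤ N → ∀ t : ℝ, 0 ≤ t → a i ≤ y 0 t → qq p i ≤ rD (y 0) t) :
    ∀ k : ℕ, ∀ t : ℝ, 0 ≤ t →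
      iterR N a p (yminus0 N a p) k t ≤ y k t ∧ y k t ≤ iterR N a p (yplus0 N p) k t := by
  classical
  obtain ⟨⟨c, hc1, hc0, hcmono, hcy⟩, hrec⟩ := hy
  have hp : ∀ i, 1 ≤ i → i ≤ N → 0 < p i := hap.2.2
  have hc : Adm N c := ⟨hc1, hcmono⟩
  have hCm : Adm N (cminus a p) := Adm_cminus hN hap
  have hzero : Adm N (fun _ => (0:ℝ)) := ⟨rfl, fun _ _ _ => le_rfl⟩
  have hy0eq : Set.EqOn (y 0) (F N p c) (Set.Ici 0) := fun t ht => hcy t ht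
  have hminus_eq : Set.EqOn (yminus0 N a p) (F N p (cminus a p)) (Set.Ici 0) := fun t _ => rfl
  have hplus_eq : Set.EqOn (yplus0 N p) (F N p (fun _ => (0:ℝ))) (Set.Ici 0) := by
    intro t ht
    show qq p N * t = _
    unfold F qq
    rw [Finset.sum_mul]
    exact Finset.sum_congr rfl fun j _ => by rw [sub_zero, pos'_of_nonneg ht]
  have hyk : ∀ k, Set.EqOn (y k) (F N p (Tseq N a p c k)) (Set.Ici 0) := by
    intro k
    induction k with
    | zero => exact hy0eq
    | succ k ih =>
      intro t ht
      rw [hrec k t ht, step_eq hN hap (Adm_Tseq hN hap hc k) ih t]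
      rfl
  have hbase1 : ∀ j, 1 ≤ j → j ≤ N → hh N p c j ≤ hh N p (cminus a p) j := by
    intro j h1 hj
    rcases eq_or_lt_of_le h1 with h | h
    · have hj1 : j = 1 := h.symm
      subst hj1
      rw [hh_one hN hc, hh_one hN hCm]
    · rw [hh_cminus hN hap j (by omega) hj]
      exact heights_le_a hN hap hc hy0eq hsp j h1 hj
  have hbase2 : ∀ j, 1 ≤ j → j ≤ N → hh N p (fun _ => (0:ℝ)) j ≤ hh N p c j := by
    intro j h1 hj
    have h2 : hh N p (fun _ => (0:ℝ)) j = 0 := F_zero hzero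
    rw [h2]
    exact hh_nonneg hp j
  intro k t ht
  constructor
  · have e1 : iterR N a p (yminus0 N a p) k t = F N p (Tseq N a p (cminus a p) k) t :=
      iter_eq hN hap hCm hminus_eq k ht
    have e2 : F N p (Tseq N a p (cminus a p) k) t ≤ F N p (Tseq N a p c k) t :=
      F_le hN hp (Adm_Tseq hN hap hc k) (Adm_Tseq hN hap hCm k)
        (hh_Tseq_le hN hap hc hCm hbase1 k) t
    have e3 : y k t = F N p (Tseq N a p c k) t := hyk k ht
    rw [e1, e3]
    exact e2
  · have e1 : iterR N a p (yplus0 N p) k t = F N p (Tseq N a p (fun _ => (0:ℝ)) k) t :=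
      iter_eq hN hap hzero hplus_eq k ht
    have e2 : F N p (Tseq N a p c k) t ≤ F N p (Tseq N a p (fun _ => (0:ℝ)) k) t :=
      F_le hN hp (Adm_Tseq hN hap hzero k) (Adm_Tseq hN hap hc k)
        (hh_Tseq_le hN hap hzero hc hbase2 k) t
    have e3 : y k t = F N p (Tseq N a p c k) t := hyk k ht
    rw [e1, e3]
    exact e2
end

section
/- Let (a,p) ∈ P^{2N}. Then for every k ≥ 0 and every t ≥ 0, y_k^−(t) ≤ y_{k+1}^−(t) and y_{k+1}^+(t) ≤ y_k^+(t). Moreover, the pointwise limits y_∞^±(t) := lim_{k→∞} y_k^±(t) exist for every t ≥ 0, and each of y_∞^− and y_∞^+ is a stationary trajectory: it is an increasing bijection of ℝ_{≥0} and, denoting its inverse by t_∞^±, it satisfies y_∞^±(t) = Σ_{j=1}^N p_j·(t − t_∞^±(a_j) + t_∞^±(a_1))_+ for all t ≥ 0. -/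
open Filter Topology
open scoped Classical

namespace S5
open Finset

noncomputable section

def SS (p u : ℕ → ℝ) (i : ℕ) : ℝ := ∑ l ∈ Finset.Icc 1 i, p l * u l

def idx (N : ℕ) : Finset ℕ := insert 1 (Finset.Icc 1 N)

def fv (N : ℕ) (p u : ℕ → ℝ) (x : ℝ) : ℝ :=
  (idx N).inf' (Finset.insert_nonempty _ _) fun i => (x + SS p u i) / qq p i

def Yt (N : ℕ) (p u : ℕ → ℝ) (t : ℝ) : ℝ := ∑ j ∈ Finset.Icc 1 N, p j * pos' (t - u j)

def Ph (N : ℕ) (a p u : ℕ → ℝ) (j : ℕ) : ℝ := fv N p u (a j) - fv N p u (a 1)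

def Adm (N : ℕ) (u : ℕ → ℝ) : Prop :=
  u 1 = 0 ∧ ∀ i j : ℕ, 1 ≤ i → i ≤ j → j ≤ N → u i ≤ u j

def Rel (N : ℕ) (u v : ℕ → ℝ) : Prop :=
  ∀ i j : ℕ, 1 ≤ i → i ≤ j → j ≤ N → v i - u i ≤ v j - u j

def om (N : ℕ) (a p : ℕ → ℝ) (k : ℕ) : ℕ → ℝ := (Ph N a p)^[k] (cminus a p)
def op (N : ℕ) (a p : ℕ → ℝ) (k : ℕ) : ℕ → ℝ := (Ph N a p)^[k] (fun _ => 0)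
def uL (N : ℕ) (a p : ℕ → ℝ) (j : ℕ) : ℝ := ⨅ k, om N a p k j
def vL (N : ℕ) (a p : ℕ → ℝ) (j : ℕ) : ℝ := ⨆ k, op N a p k j

end

variable {N : ℕ} {a p : ℕ → ℝ}

/-! ### basic facts -/

lemma ha_mono (hap : IsParam N a p) : ∀ i j : ℕ, 1 ≤ i → i ≤ j → j ≤ N → a i ≤ a j := by
  intro i j h1 hij
  induction j, hij using Nat.le_induction with
  | base => intro _; exact le_rfl
  | succ n hn ih =>
    intro h
    exact (ih (by omega)).trans (hap.2.1 n (by omega) (by omega)).le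

lemma ha_pos (hap : IsParam N a p) {j : ℕ} (h1 : 1 ≤ j) (h2 : j ≤ N) : 0 < a j :=
  lt_of_lt_of_le hap.1 (ha_mono hap 1 j le_rfl h1 h2)

lemma hq_pos (hap : IsParam N a p) {i : ℕ} (h1 : 1 ≤ i) (h2 : i ≤ N) : 0 < qq p i := by
  apply Finset.sum_pos
  · intro j hj
    rw [Finset.mem_Icc] at hj
    exact hap.2.2 j hj.1 (hj.2.trans h2)
  · exact ⟨1, Finset.mem_Icc.mpr ⟨le_rfl, h1⟩⟩

lemma hq_mono (hap : IsParam N a p) {i j : ℕ} (hij : i ≤ j) (hj : j ≤ N) :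
    qq p i ≤ qq p j := by
  apply Finset.sum_le_sum_of_subset_of_nonneg (Finset.Icc_subset_Icc_right hij)
  intro l hl _
  rw [Finset.mem_Icc] at hl
  exact (hap.2.2 l hl.1 (hl.2.trans hj)).le

lemma Icc_eq_Ioc (m : ℕ) : Finset.Icc 1 m = Finset.Ioc 0 m := by
  ext x; simp only [Finset.mem_Icc, Finset.mem_Ioc]; omega

lemma qq_sub (p : ℕ → ℝ) {i j : ℕ} (hij : i ≤ j) :
    qq p j - qq p i = ∑ l ∈ Finset.Ioc i j, p l := by
  have h0 : ∀ m : ℕ, qq p m = ∑ l ∈ Finset.Ioc 0 m, p l := by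
    intro m; rw [qq, Icc_eq_Ioc]
  rw [h0 i, h0 j, ← Finset.sum_Ioc_consecutive p (Nat.zero_le i) hij]
  ring

lemma qq_succ (p : ℕ → ℝ) (n : ℕ) : qq p (n + 1) = qq p n + p (n + 1) := by
  unfold qq
  rw [Finset.sum_Icc_succ_top (by omega)]

lemma qq_one (p : ℕ → ℝ) : qq p 1 = p 1 := by simp [qq]

lemma SS_succ (p u : ℕ → ℝ) (n : ℕ) : SS p u (n + 1) = SS p u n + p (n + 1) * u (n + 1) := by
  unfold SS
  rw [Finset.sum_Icc_succ_top (by omega)]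

lemma SS_one (p u : ℕ → ℝ) : SS p u 1 = p 1 * u 1 := by simp [S5.SS]

lemma Adm.nonneg {u : ℕ → ℝ} (hu : Adm N u) {j : ℕ} (h1 : 1 ≤ j) (h2 : j ≤ N) : 0 ≤ u j := by
  have := hu.2 1 j le_rfl h1 h2
  rw [hu.1] at this; exact this

lemma SS_nonneg (hap : IsParam N a p) {u : ℕ → ℝ} (hu : Adm N u) {i : ℕ} (hi : i ≤ N) :
    0 ≤ SS p u i := by
  apply Finset.sum_nonneg
  intro l hl
  rw [Finset.mem_Icc] at hl
  exact mul_nonneg (hap.2.2 l hl.1 (hl.2.trans hi)).le (hu.nonneg hl.1 (hl.2.trans hi))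

lemma SS_mono_u (hap : IsParam N a p) {u v : ℕ → ℝ} (h : ∀ j, 1 ≤ j → j ≤ N → u j ≤ v j)
    {i : ℕ} (hi : i ≤ N) : SS p u i ≤ SS p v i := by
  apply Finset.sum_le_sum
  intro l hl
  rw [Finset.mem_Icc] at hl
  exact mul_le_mul_of_nonneg_left (h l hl.1 (hl.2.trans hi)) (hap.2.2 l hl.1 (hl.2.trans hi)).le

lemma mem_idx {i : ℕ} (h1 : 1 ≤ i) (h2 : i ≤ N) : i ∈ idx N :=
  Finset.mem_insert_of_mem (Finset.mem_Icc.mpr ⟨h1, h2⟩)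

lemma idx_bounds (hN : 1 ≤ N) {i : ℕ} (h : i ∈ idx N) : 1 ≤ i ∧ i ≤ N := by
  rcases Finset.mem_insert.mp h with h | h
  · subst h; exact ⟨le_rfl, hN⟩
  · exact Finset.mem_Icc.mp h

/-! ### the inverse function fv -/

lemma fv_le {u : ℕ → ℝ} (x : ℝ) {i : ℕ} (h1 : 1 ≤ i) (h2 : i ≤ N) :
    fv N p u x ≤ (x + SS p u i) / qq p i :=
  Finset.inf'_le _ (mem_idx h1 h2)

lemma fv_min (hN : 1 ≤ N) (u : ℕ → ℝ) (x : ℝ) :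
    ∃ i, 1 ≤ i ∧ i ≤ N ∧ fv N p u x = (x + SS p u i) / qq p i := by
  obtain ⟨i, hi, hfi⟩ := Finset.exists_mem_eq_inf' (s := idx N)
    (Finset.insert_nonempty _ _) (fun i => (x + SS p u i) / qq p i)
  exact ⟨i, (idx_bounds hN hi).1, (idx_bounds hN hi).2, hfi⟩

lemma fv_ge (hN : 1 ≤ N) {u : ℕ → ℝ} {x c : ℝ}
    (h : ∀ i, 1 ≤ i → i ≤ N → c ≤ (x + SS p u i) / qq p i) : c ≤ fv N p u x := by
  apply Finset.le_inf'
  intro b hb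
  exact h b (idx_bounds hN hb).1 (idx_bounds hN hb).2

lemma fv_nonneg (hN : 1 ≤ N) (hap : IsParam N a p) {u : ℕ → ℝ} (hu : Adm N u) {x : ℝ}
    (hx : 0 ≤ x) : 0 ≤ fv N p u x := by
  apply fv_ge hN
  intro i hi1 hiN
  exact div_nonneg (add_nonneg hx (SS_nonneg hap hu hiN)) (hq_pos hap hi1 hiN).le

lemma fv_mono_x (hN : 1 ≤ N) (hap : IsParam N a p) (u : ℕ → ℝ) {x x' : ℝ} (h : x ≤ x') :
    fv N p u x ≤ fv N p u x' := by
  obtain ⟨i, h1, h2, hi⟩ := fv_min (p := p) hN u x'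
  rw [hi]
  refine (fv_le x h1 h2).trans ?_
  have hq := hq_pos hap h1 h2
  gcongr

/-! ### evaluation of Yt -/

lemma Yt_nonneg (hap : IsParam N a p) (u : ℕ → ℝ) (t : ℝ) : 0 ≤ Yt N p u t := by
  apply Finset.sum_nonneg
  intro l hl
  rw [Finset.mem_Icc] at hl
  exact mul_nonneg (hap.2.2 l hl.1 hl.2).le (le_max_right _ _)

lemma Yt_eval (hap : IsParam N a p) {u : ℕ → ℝ} {i : ℕ} (h1 : 1 ≤ i) (hiN : i ≤ N) {t : ℝ}
    (hle : ∀ l, 1 ≤ l → l ≤ i → u l ≤ t) (hge : ∀ l, i < l → l ≤ N → t ≤ u l) :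
    Yt N p u t = qq p i * t - SS p u i := by
  unfold Yt
  rw [Icc_eq_Ioc, ← Finset.sum_Ioc_consecutive _ (Nat.zero_le i) hiN]
  have e2 : ∑ l ∈ Finset.Ioc i N, p l * pos' (t - u l) = 0 := by
    apply Finset.sum_eq_zero
    intro l hl
    rw [Finset.mem_Ioc] at hl
    have : pos' (t - u l) = 0 := max_eq_right (by have := hge l hl.1 hl.2; linarith)
    rw [this, mul_zero]
  rw [e2, add_zero]
  have e1 : ∀ l ∈ Finset.Ioc 0 i, p l * pos' (t - u l) = p l * t - p l * u l := by
    intro l hl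
    rw [Finset.mem_Ioc] at hl
    have : pos' (t - u l) = t - u l := max_eq_left (by have := hle l hl.1 hl.2; linarith)
    rw [this]; ring
  rw [Finset.sum_congr rfl e1, Finset.sum_sub_distrib]
  unfold qq SS
  rw [Icc_eq_Ioc, Finset.sum_mul]

lemma Yt_lower (hap : IsParam N a p) (u : ℕ → ℝ) {i : ℕ} (h1 : 1 ≤ i) (h2 : i ≤ N) (t : ℝ) :
    qq p i * t - SS p u i ≤ Yt N p u t := by
  have h3 : ∑ l ∈ Finset.Icc 1 i, p l * (t - u l) ≤ ∑ l ∈ Finset.Icc 1 i, p l * pos' (t - u l) := by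
    apply Finset.sum_le_sum
    intro l hl
    rw [Finset.mem_Icc] at hl
    exact mul_le_mul_of_nonneg_left (le_max_left _ _) (hap.2.2 l hl.1 (hl.2.trans h2)).le
  have h4 : ∑ l ∈ Finset.Icc 1 i, p l * pos' (t - u l) ≤ Yt N p u t := by
    apply Finset.sum_le_sum_of_subset_of_nonneg (Finset.Icc_subset_Icc_right h2)
    intro l hl _
    rw [Finset.mem_Icc] at hl
    exact mul_nonneg (hap.2.2 l hl.1 hl.2).le (le_max_right _ _)
  have h5 : ∑ l ∈ Finset.Icc 1 i, p l * (t - u l) = qq p i * t - SS p u i := by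
    unfold qq SS
    rw [Finset.sum_mul, ← Finset.sum_sub_distrib]
    exact Finset.sum_congr rfl fun l _ => by ring
  linarith

lemma Yt_breaks (hN : 1 ≤ N) (hap : IsParam N a p) {u : ℕ → ℝ} (hu : Adm N u) {t : ℝ}
    (ht : 0 ≤ t) : ∃ i, 1 ≤ i ∧ i ≤ N ∧ Yt N p u t = qq p i * t - SS p u i := by
  set F := (Finset.Icc 1 N).filter (fun l => u l ≤ t) with hF
  have h1F : 1 ∈ F := by
    rw [hF, Finset.mem_filter, Finset.mem_Icc]
    exact ⟨⟨le_rfl, hN⟩, by rw [hu.1]; exact ht⟩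
  have hFne : F.Nonempty := ⟨1, h1F⟩
  set i := F.max' hFne with hidef
  have hiF : i ∈ F := F.max'_mem hFne
  rw [hF, Finset.mem_filter, Finset.mem_Icc] at hiF
  refine ⟨i, hiF.1.1, hiF.1.2, ?_⟩
  apply Yt_eval hap hiF.1.1 hiF.1.2
  · intro l hl1 hli
    exact (hu.2 l i hl1 hli hiF.1.2).trans hiF.2
  · intro l hil hlN
    by_contra hc
    push_neg at hc
    have : l ∈ F := by
      rw [hF, Finset.mem_filter, Finset.mem_Icc]
      exact ⟨⟨by omega, hlN⟩, hc.le⟩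
    have := F.le_max' l this
    omega

lemma Yt_fv (hN : 1 ≤ N) (hap : IsParam N a p) {u : ℕ → ℝ} (hu : Adm N u) {x : ℝ}
    (hx : 0 ≤ x) : Yt N p u (fv N p u x) = x := by
  have ht0 : 0 ≤ fv N p u x := fv_nonneg hN hap hu hx
  obtain ⟨i, hi1, hiN, hYt⟩ := Yt_breaks hN hap hu ht0
  obtain ⟨j, hj1, hjN, hfj⟩ := fv_min (p := p) hN u x
  have hqi := hq_pos hap hi1 hiN
  have hqj := hq_pos hap hj1 hjN
  have h1 : Yt N p u (fv N p u x) ≤ x := by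
    rw [hYt]
    have h := fv_le (p := p) (u := u) x hi1 hiN
    have h2 : qq p i * fv N p u x ≤ qq p i * ((x + SS p u i) / qq p i) :=
      mul_le_mul_of_nonneg_left h hqi.le
    rw [mul_div_cancel₀ _ hqi.ne'] at h2
    linarith
  have h2 : x ≤ Yt N p u (fv N p u x) := by
    have h := Yt_lower hap u hj1 hjN (fv N p u x)
    rw [hfj] at h ⊢
    rw [mul_div_cancel₀ _ hqj.ne'] at h
    linarith [Yt_lower hap u hj1 hjN ((x + SS p u j) / qq p j)]
  linarith

lemma Yt_strictMono (hN : 1 ≤ N) (hap : IsParam N a p) {u : ℕ → ℝ} (hu : Adm N u) :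
    StrictMonoOn (Yt N p u) (Set.Ici 0) := by
  intro s hs t ht hst
  unfold Yt
  apply Finset.sum_lt_sum
  · intro l hl
    rw [Finset.mem_Icc] at hl
    exact mul_le_mul_of_nonneg_left (max_le_max (by linarith) le_rfl)
      (hap.2.2 l hl.1 hl.2).le
  · refine ⟨1, Finset.mem_Icc.mpr ⟨le_rfl, hN⟩, ?_⟩
    rw [hu.1, sub_zero, sub_zero]
    have h1 : pos' s = s := max_eq_left hs
    have h2 : pos' t = t := max_eq_left (le_trans hs hst.le)
    rw [h1, h2]
    exact mul_lt_mul_of_pos_left hst (hap.2.2 1 le_rfl hN)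

lemma tinv_Yt (hN : 1 ≤ N) (hap : IsParam N a p) {u : ℕ → ℝ} (hu : Adm N u) {x : ℝ}
    (hx : 0 ≤ x) : tinv (Yt N p u) x = fv N p u x := by
  have h1 := Yt_fv hN hap hu hx
  have h2 : fv N p u x ∈ Set.Ici (0 : ℝ) := fv_nonneg hN hap hu hx
  have h3 := ((Yt_strictMono hN hap hu).injOn).leftInvOn_invFunOn h2
  rw [h1] at h3
  simpa [tinv] using h3

end S5

namespace S5

variable {N : ℕ} {a p : ℕ → ℝ}

/-! ### the quadrangle inequality -/

lemma Wavg (hap : IsParam N a p) {u v : ℕ → ℝ} (huv : Rel N u v) {j i : ℕ}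
    (h1 : 1 ≤ j) (hji : j ≤ i) (hiN : i ≤ N) :
    (SS p v j - SS p u j) * qq p i ≤ (SS p v i - SS p u i) * qq p j := by
  have hW : ∀ m : ℕ, SS p v m - SS p u m = ∑ l ∈ Finset.Icc 1 m, p l * (v l - u l) := by
    intro m
    unfold SS
    rw [← Finset.sum_sub_distrib]
    exact Finset.sum_congr rfl fun l _ => by ring
  have hsub : (SS p v i - SS p u i) - (SS p v j - SS p u j)
      = ∑ l ∈ Finset.Ioc j i, p l * (v l - u l) := by
    rw [hW i, hW j, Icc_eq_Ioc, Icc_eq_Ioc,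
      ← Finset.sum_Ioc_consecutive _ (Nat.zero_le j) hji]
    ring
  have hA : SS p v j - SS p u j ≤ (v j - u j) * qq p j := by
    rw [hW j]
    have : ∀ l ∈ Finset.Icc 1 j, p l * (v l - u l) ≤ p l * (v j - u j) := by
      intro l hl
      rw [Finset.mem_Icc] at hl
      exact mul_le_mul_of_nonneg_left (huv l j hl.1 hl.2 (hji.trans hiN))
        (hap.2.2 l hl.1 ((hl.2.trans hji).trans hiN)).le
    calc ∑ l ∈ Finset.Icc 1 j, p l * (v l - u l)
        ≤ ∑ l ∈ Finset.Icc 1 j, p l * (v j - u j) := Finset.sum_le_sum this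
      _ = (v j - u j) * qq p j := by rw [qq, ← Finset.sum_mul]; ring
  have hB : (v j - u j) * (qq p i - qq p j)
      ≤ (SS p v i - SS p u i) - (SS p v j - SS p u j) := by
    rw [hsub, qq_sub p hji]
    have : ∀ l ∈ Finset.Ioc j i, p l * (v j - u j) ≤ p l * (v l - u l) := by
      intro l hl
      rw [Finset.mem_Ioc] at hl
      exact mul_le_mul_of_nonneg_left (huv j l h1 hl.1.le (hl.2.trans hiN))
        (hap.2.2 l (by omega) (hl.2.trans hiN)).le
    calc (v j - u j) * ∑ l ∈ Finset.Ioc j i, p l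
        = ∑ l ∈ Finset.Ioc j i, p l * (v j - u j) := by rw [Finset.mul_sum]; exact Finset.sum_congr rfl fun l _ => by ring
      _ ≤ ∑ l ∈ Finset.Ioc j i, p l * (v l - u l) := Finset.sum_le_sum this
  have hqm : qq p j ≤ qq p i := hq_mono hap hji hiN
  have hqj : 0 < qq p j := hq_pos hap h1 (hji.trans hiN)
  nlinarith [mul_le_mul_of_nonneg_right hA (sub_nonneg.mpr hqm),
    mul_le_mul_of_nonneg_right hB hqj.le]

lemma key_quad (hN : 1 ≤ N) (hap : IsParam N a p) {u v : ℕ → ℝ}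
    (huv : Rel N u v) {x x' : ℝ} (hxx : x ≤ x') :
    fv N p u x' - fv N p u x ≤ fv N p v x' - fv N p v x := by
  obtain ⟨i, hi1, hiN, hAi⟩ := fv_min (p := p) hN v x'
  obtain ⟨j, hj1, hjN, hBj⟩ := fv_min (p := p) hN u x
  rw [sub_le_sub_iff, hAi, hBj]
  rcases le_total i j with hij | hij
  · have hC : fv N p u x' ≤ (x' + SS p u j) / qq p j := fv_le x' hj1 hjN
    have hD : fv N p v x ≤ (x + SS p v i) / qq p i := fv_le x hi1 hiN
    have hqi := hq_pos hap hi1 hiN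
    have hqj := hq_pos hap hj1 hjN
    have hqij : qq p i ≤ qq p j := hq_mono hap hij hjN
    have d1 : (x' + SS p u j) / qq p j = (x + SS p u j) / qq p j + (x' - x) / qq p j := by
      rw [← add_div]; ring_nf
    have d2 : (x' + SS p v i) / qq p i = (x + SS p v i) / qq p i + (x' - x) / qq p i := by
      rw [← add_div]; ring_nf
    have d3 : (x' - x) / qq p j ≤ (x' - x) / qq p i :=
      div_le_div_of_nonneg_left (by linarith) hqi hqij
    linarith
  · have hC : fv N p u x' ≤ (x' + SS p u i) / qq p i := fv_le x' hi1 hiN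
    have hD : fv N p v x ≤ (x + SS p v j) / qq p j := fv_le x hj1 hjN
    have hqi := hq_pos hap hi1 hiN
    have hqj := hq_pos hap hj1 hjN
    have hW := Wavg hap huv hj1 hij hiN
    have d1 : (x' + SS p v i) / qq p i
        = (x' + SS p u i) / qq p i + (SS p v i - SS p u i) / qq p i := by
      rw [← add_div]; ring_nf
    have d2 : (x + SS p v j) / qq p j
        = (x + SS p u j) / qq p j + (SS p v j - SS p u j) / qq p j := by
      rw [← add_div]; ring_nf
    have d3 : (SS p v j - SS p u j) / qq p j ≤ (SS p v i - SS p u i) / qq p i :=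
      (div_le_div_iff₀ hqj hqi).mpr hW
    linarith

/-! ### the map Ph -/

lemma Ph_one (u : ℕ → ℝ) : Ph N a p u 1 = 0 := sub_self _

lemma Adm_Ph (hN : 1 ≤ N) (hap : IsParam N a p) (u : ℕ → ℝ) : Adm N (Ph N a p u) := by
  refine ⟨Ph_one u, ?_⟩
  intro i j h1 hij hjN
  unfold Ph
  have := fv_mono_x (p := p) hN hap u (ha_mono hap i j h1 hij hjN)
  linarith

lemma Rel_Ph (hN : 1 ≤ N) (hap : IsParam N a p) {u v : ℕ → ℝ} (huv : Rel N u v) :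
    Rel N (Ph N a p u) (Ph N a p v) := by
  intro i j h1 hij hjN
  have := key_quad hN hap huv (x := a i) (x' := a j) (ha_mono hap i j h1 hij hjN)
  unfold Ph
  linarith

lemma Rel.le {u v : ℕ → ℝ} (hu : Adm N u) (hv : Adm N v) (huv : Rel N u v) :
    ∀ j, 1 ≤ j → j ≤ N → u j ≤ v j := by
  intro j h1 h2
  have := huv 1 j le_rfl h1 h2
  rw [hu.1, hv.1] at this
  linarith

/-! ### base case: cminus -/

lemma c_one : cminus a p 1 = 0 := by simp [cminus]

lemma c_eval {j : ℕ} (h2 : 2 ≤ j) :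
    cminus a p j = a 1 / qq p 1 + ∑ l ∈ Finset.Icc 2 j, (a l - a (l - 1)) / qq p (l - 1) := by
  rw [cminus, if_neg (by omega)]

lemma c_two : cminus a p 2 = a 1 / qq p 1 + (a 2 - a 1) / qq p 1 := by
  rw [c_eval le_rfl]
  norm_num [Finset.Icc_self]

lemma D_nonneg (hap : IsParam N a p) {l : ℕ} (h2 : 2 ≤ l) (hl : l ≤ N) :
    0 ≤ (a l - a (l - 1)) / qq p (l - 1) := by
  apply div_nonneg
  · have := ha_mono hap (l - 1) l (by omega) (by omega) hl
    linarith
  · exact (hq_pos hap (by omega) (by omega)).le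

lemma c_mono (hN : 1 ≤ N) (hap : IsParam N a p) : Adm N (cminus a p) := by
  refine ⟨c_one, ?_⟩
  intro i j h1 hij hjN
  rcases Nat.lt_or_ge i 2 with hi2 | hi2
  · have hi1 : i = 1 := by omega
    subst hi1
    rw [c_one]
    rcases Nat.lt_or_ge j 2 with hj2 | hj2
    · have : j = 1 := by omega
      subst this; rw [c_one]
    · rw [c_eval hj2]
      have h1 : 0 ≤ a 1 / qq p 1 := div_nonneg hap.1.le (hq_pos hap le_rfl hN).le
      have h2 : 0 ≤ ∑ l ∈ Finset.Icc 2 j, (a l - a (l - 1)) / qq p (l - 1) := by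
        apply Finset.sum_nonneg
        intro l hl
        rw [Finset.mem_Icc] at hl
        exact D_nonneg hap hl.1 (hl.2.trans hjN)
      linarith
  · rw [c_eval hi2, c_eval (hi2.trans hij)]
    have hIcc : ∀ m : ℕ, Finset.Icc 2 m = Finset.Ioc 1 m := by
      intro m; ext x; simp only [Finset.mem_Icc, Finset.mem_Ioc]; omega
    rw [hIcc i, hIcc j, ← Finset.sum_Ioc_consecutive _ (by omega : 1 ≤ i) hij]
    have h2 : 0 ≤ ∑ l ∈ Finset.Ioc i j, (a l - a (l - 1)) / qq p (l - 1) := by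
      apply Finset.sum_nonneg
      intro l hl
      rw [Finset.mem_Ioc] at hl
      exact D_nonneg hap (by omega) (hl.2.trans hjN)
    linarith

lemma c_lb (hN : 1 ≤ N) (hap : IsParam N a p) {l : ℕ} (h2 : 2 ≤ l) (hl : l ≤ N) :
    a 1 / qq p 1 ≤ cminus a p l := by
  rw [c_eval h2]
  have : 0 ≤ ∑ m ∈ Finset.Icc 2 l, (a m - a (m - 1)) / qq p (m - 1) := by
    apply Finset.sum_nonneg
    intro m hm
    rw [Finset.mem_Icc] at hm
    exact D_nonneg hap hm.1 (hm.2.trans hl)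
  linarith

lemma csum (hN : 1 ≤ N) (hap : IsParam N a p) :
    ∀ j, 2 ≤ j → j ≤ N → qq p j * cminus a p j - SS p (cminus a p) j = a j := by
  intro j h2
  induction j, h2 using Nat.le_induction with
  | base =>
    intro h2N
    have hq1 : qq p 1 = p 1 := qq_one p
    have hp1 : (0:ℝ) < p 1 := hap.2.2 1 le_rfl hN
    rw [show (2:ℕ) = 1 + 1 from rfl, qq_succ, SS_succ, qq_one, SS_one, c_one, c_two, hq1]
    field_simp
    ring
  | succ n hn ih =>
    intro hnN
    have hn1 : n ≤ N := by omega
    have hGn := ih hn1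
    have hqn : (0:ℝ) < qq p n := hq_pos hap (by omega) hn1
    have cdiff : cminus a p (n + 1) = cminus a p n + (a (n + 1) - a n) / qq p n := by
      rw [c_eval (by omega : 2 ≤ n + 1), c_eval hn,
        Finset.sum_Icc_succ_top (by omega : 2 ≤ n + 1)]
      simp only [Nat.add_sub_cancel]
      ring
    have hcancel : qq p n * ((a (n + 1) - a n) / qq p n) = a (n + 1) - a n :=
      mul_div_cancel₀ _ hqn.ne'
    rw [qq_succ, SS_succ, cdiff]
    linear_combination hGn + hcancel

lemma Yc_eval (hN : 1 ≤ N) (hap : IsParam N a p) {j : ℕ} (h2 : 2 ≤ j) (hjN : j ≤ N) :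
    Yt N p (cminus a p) (cminus a p j) = a j := by
  have hc := c_mono hN hap
  rw [Yt_eval hap (by omega : 1 ≤ j) hjN
    (fun l hl1 hlj => hc.2 l j hl1 hlj hjN)
    (fun l hjl hlN => hc.2 j l (by omega) hjl.le hlN)]
  exact csum hN hap j h2 hjN

lemma Yc_a1 (hN : 1 ≤ N) (hap : IsParam N a p) :
    Yt N p (cminus a p) (a 1 / qq p 1) = a 1 := by
  have hq1 : (0:ℝ) < qq p 1 := hq_pos hap le_rfl hN
  rw [Yt_eval hap le_rfl hN
    (fun l hl1 hl2 => by
      have : l = 1 := by omega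
      subst this
      rw [c_one]
      exact div_nonneg hap.1.le hq1.le)
    (fun l h1l hlN => c_lb hN hap (by omega) hlN)]
  rw [SS_one, c_one, mul_zero, mul_div_cancel₀ _ hq1.ne']
  ring

lemma fv_c (hN : 1 ≤ N) (hap : IsParam N a p) {j : ℕ} (h2 : 2 ≤ j) (hjN : j ≤ N) :
    fv N p (cminus a p) (a j) = cminus a p j := by
  have hc := c_mono hN hap
  have haj : (0:ℝ) ≤ a j := (ha_pos hap (by omega) hjN).le
  apply (Yt_strictMono hN hap hc).injOn (fv_nonneg hN hap hc haj)
    (hc.nonneg (by omega) hjN)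
  rw [Yt_fv hN hap hc haj, Yc_eval hN hap h2 hjN]

lemma fv_c_a1 (hN : 1 ≤ N) (hap : IsParam N a p) :
    fv N p (cminus a p) (a 1) = a 1 / qq p 1 := by
  have hc := c_mono hN hap
  have hq1 : (0:ℝ) < qq p 1 := hq_pos hap le_rfl hN
  apply (Yt_strictMono hN hap hc).injOn (fv_nonneg hN hap hc hap.1.le)
    (Set.mem_Ici.mpr (div_nonneg hap.1.le hq1.le))
  rw [Yt_fv hN hap hc hap.1.le, Yc_a1 hN hap]

lemma Rel_Ph_c (hN : 1 ≤ N) (hap : IsParam N a p) :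
    Rel N (Ph N a p (cminus a p)) (cminus a p) := by
  have hval : ∀ m, 1 ≤ m → m ≤ N →
      cminus a p m - Ph N a p (cminus a p) m = if m = 1 then 0 else a 1 / qq p 1 := by
    intro m h1m hmN
    by_cases hm : m = 1
    · subst hm
      rw [if_pos rfl, Ph_one, c_one, sub_zero]
    · rw [if_neg hm, Ph, fv_c hN hap (by omega) hmN, fv_c_a1 hN hap]
      ring
  intro i j h1 hij hjN
  rw [hval i h1 (hij.trans hjN), hval j (h1.trans hij) hjN]
  have hnn : (0:ℝ) ≤ a 1 / qq p 1 := div_nonneg hap.1.le (hq_pos hap le_rfl hN).le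
  by_cases hi : i = 1
  · rw [if_pos hi]
    by_cases hj : j = 1
    · rw [if_pos hj]
    · rw [if_neg hj]; exact hnn
  · rw [if_neg hi, if_neg (by omega : j ≠ 1)]

end S5

namespace S5

variable {N : ℕ} {a p : ℕ → ℝ}

/-! ### base case: zero offsets -/

lemma Adm_zero : Adm N (fun _ => (0:ℝ)) := ⟨rfl, fun _ _ _ _ _ => le_rfl⟩

lemma Rel_zero_Ph (hN : 1 ≤ N) (hap : IsParam N a p) :
    Rel N (fun _ => (0:ℝ)) (Ph N a p (fun _ => (0:ℝ))) := by
  intro i j h1 hij hjN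
  have := (Adm_Ph hN hap (fun _ => (0:ℝ))).2 i j h1 hij hjN
  linarith

lemma Rel_zero_c (hN : 1 ≤ N) (hap : IsParam N a p) :
    Rel N (fun _ => (0:ℝ)) (cminus a p) := by
  intro i j h1 hij hjN
  have := (c_mono hN hap).2 i j h1 hij hjN
  linarith

/-! ### orbits -/

lemma om_zero : om N a p 0 = cminus a p := rfl
lemma om_succ (k : ℕ) : om N a p (k + 1) = Ph N a p (om N a p k) :=
  Function.iterate_succ_apply' _ _ _
lemma op_zero : op N a p 0 = fun _ => (0:ℝ) := rfl
lemma op_succ (k : ℕ) : op N a p (k + 1) = Ph N a p (op N a p k) :=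
  Function.iterate_succ_apply' _ _ _

lemma Adm_om (hN : 1 ≤ N) (hap : IsParam N a p) (k : ℕ) : Adm N (om N a p k) := by
  induction k with
  | zero => exact c_mono hN hap
  | succ n ih => rw [om_succ]; exact Adm_Ph hN hap _

lemma Adm_op (hN : 1 ≤ N) (hap : IsParam N a p) (k : ℕ) : Adm N (op N a p k) := by
  induction k with
  | zero => exact Adm_zero
  | succ n ih => rw [op_succ]; exact Adm_Ph hN hap _

lemma Rel_om (hN : 1 ≤ N) (hap : IsParam N a p) (k : ℕ) :
    Rel N (om N a p (k + 1)) (om N a p k) := by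
  induction k with
  | zero => rw [om_succ, om_zero]; exact Rel_Ph_c hN hap
  | succ n ih =>
    rw [om_succ n] at ih
    rw [om_succ (n + 1), om_succ n]
    exact Rel_Ph hN hap ih

lemma Rel_op (hN : 1 ≤ N) (hap : IsParam N a p) (k : ℕ) :
    Rel N (op N a p k) (op N a p (k + 1)) := by
  induction k with
  | zero => rw [op_succ, op_zero]; exact Rel_zero_Ph hN hap
  | succ n ih =>
    rw [op_succ n] at ih
    rw [op_succ (n + 1), op_succ n]
    exact Rel_Ph hN hap ih

lemma Rel_op_om (hN : 1 ≤ N) (hap : IsParam N a p) (k : ℕ) :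
    Rel N (op N a p k) (om N a p k) := by
  induction k with
  | zero => exact Rel_zero_c hN hap
  | succ n ih => rw [om_succ, op_succ]; exact Rel_Ph hN hap ih

lemma om_step_le (hN : 1 ≤ N) (hap : IsParam N a p) (k : ℕ) :
    ∀ j, 1 ≤ j → j ≤ N → om N a p (k + 1) j ≤ om N a p k j :=
  Rel.le (Adm_om hN hap (k + 1)) (Adm_om hN hap k) (Rel_om hN hap k)

lemma op_step_le (hN : 1 ≤ N) (hap : IsParam N a p) (k : ℕ) :
    ∀ j, 1 ≤ j → j ≤ N → op N a p k j ≤ op N a p (k + 1) j :=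
  Rel.le (Adm_op hN hap k) (Adm_op hN hap (k + 1)) (Rel_op hN hap k)

lemma om_antitone (hN : 1 ≤ N) (hap : IsParam N a p) {j : ℕ} (h1 : 1 ≤ j) (h2 : j ≤ N) :
    Antitone (fun k => om N a p k j) :=
  antitone_nat_of_succ_le fun k => om_step_le hN hap k j h1 h2

lemma op_monotone (hN : 1 ≤ N) (hap : IsParam N a p) {j : ℕ} (h1 : 1 ≤ j) (h2 : j ≤ N) :
    Monotone (fun k => op N a p k j) :=
  monotone_nat_of_le_succ fun k => op_step_le hN hap k j h1 h2

lemma op_le_c (hN : 1 ≤ N) (hap : IsParam N a p) (k : ℕ) {j : ℕ} (h1 : 1 ≤ j) (h2 : j ≤ N) :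
    op N a p k j ≤ cminus a p j := by
  have h3 : op N a p k j ≤ om N a p k j :=
    Rel.le (Adm_op hN hap k) (Adm_om hN hap k) (Rel_op_om hN hap k) j h1 h2
  have h4 : om N a p k j ≤ om N a p 0 j := om_antitone hN hap h1 h2 (Nat.zero_le k)
  rw [om_zero] at h4
  linarith

/-! ### limits -/

lemma om_bddBelow (hN : 1 ≤ N) (hap : IsParam N a p) {j : ℕ} (h1 : 1 ≤ j) (h2 : j ≤ N) :
    BddBelow (Set.range fun k => om N a p k j) := by
  refine ⟨0, ?_⟩
  rintro x ⟨k, rfl⟩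
  exact (Adm_om hN hap k).nonneg h1 h2

lemma op_bddAbove (hN : 1 ≤ N) (hap : IsParam N a p) {j : ℕ} (h1 : 1 ≤ j) (h2 : j ≤ N) :
    BddAbove (Set.range fun k => op N a p k j) := by
  refine ⟨cminus a p j, ?_⟩
  rintro x ⟨k, rfl⟩
  exact op_le_c hN hap k h1 h2

lemma om_tendsto (hN : 1 ≤ N) (hap : IsParam N a p) {j : ℕ} (h1 : 1 ≤ j) (h2 : j ≤ N) :
    Tendsto (fun k => om N a p k j) atTop (nhds (uL N a p j)) :=
  tendsto_atTop_ciInf (om_antitone hN hap h1 h2) (om_bddBelow hN hap h1 h2)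

lemma op_tendsto (hN : 1 ≤ N) (hap : IsParam N a p) {j : ℕ} (h1 : 1 ≤ j) (h2 : j ≤ N) :
    Tendsto (fun k => op N a p k j) atTop (nhds (vL N a p j)) :=
  tendsto_atTop_ciSup (op_monotone hN hap h1 h2) (op_bddAbove hN hap h1 h2)

lemma Adm_uL (hN : 1 ≤ N) (hap : IsParam N a p) : Adm N (uL N a p) := by
  constructor
  · have h : (fun k => om N a p k 1) = fun _ => (0:ℝ) := by
      funext k; exact (Adm_om hN hap k).1
    rw [uL, h]
    exact ciInf_const
  · intro i j h1 hij hjN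
    apply le_ciInf
    intro k
    exact ciInf_le_of_le (om_bddBelow hN hap h1 (hij.trans hjN)) k
      ((Adm_om hN hap k).2 i j h1 hij hjN)

lemma Adm_vL (hN : 1 ≤ N) (hap : IsParam N a p) : Adm N (vL N a p) := by
  constructor
  · have h : (fun k => op N a p k 1) = fun _ => (0:ℝ) := by
      funext k; exact (Adm_op hN hap k).1
    rw [vL, h]
    exact ciSup_const
  · intro i j h1 hij hjN
    apply ciSup_le
    intro k
    exact le_ciSup_of_le (op_bddAbove hN hap (h1.trans hij) hjN) k
      ((Adm_op hN hap k).2 i j h1 hij hjN)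

/-! ### continuity of fv and the fixed point -/

lemma fv_approx (hN : 1 ≤ N) (hap : IsParam N a p) {u u' : ℕ → ℝ} {ε : ℝ}
    (h : ∀ j, 1 ≤ j → j ≤ N → u' j ≤ u j + ε) (x : ℝ) :
    fv N p u' x ≤ fv N p u x + ε := by
  obtain ⟨i, h1, h2, hi⟩ := fv_min (p := p) hN u x
  have hqi := hq_pos hap h1 h2
  have hSS : SS p u' i ≤ SS p u i + ε * qq p i := by
    have := SS_mono_u hap (u := u') (v := fun j => u j + ε) (fun j hj1 hj2 => h j hj1 hj2) h2
    have he : SS p (fun j => u j + ε) i = SS p u i + ε * qq p i := by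
      unfold SS qq
      rw [Finset.mul_sum, ← Finset.sum_add_distrib]
      exact Finset.sum_congr rfl fun l _ => by ring
    linarith
  have h3 : fv N p u' x ≤ (x + SS p u' i) / qq p i := fv_le x h1 h2
  have h4 : (x + SS p u' i) / qq p i ≤ (x + SS p u i + ε * qq p i) / qq p i := by
    rw [div_le_div_iff₀ hqi hqi]
    exact mul_le_mul_of_nonneg_right (by linarith) hqi.le
  have h5 : (x + SS p u i + ε * qq p i) / qq p i = (x + SS p u i) / qq p i + ε := by
    field_simp
  rw [hi]
  linarith

lemma Ph_approx (hN : 1 ≤ N) (hap : IsParam N a p) {u u' : ℕ → ℝ} {ε : ℝ}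
    (h : ∀ j, 1 ≤ j → j ≤ N → |u' j - u j| ≤ ε) {m : ℕ} (hm1 : 1 ≤ m) (hmN : m ≤ N) :
    |Ph N a p u' m - Ph N a p u m| ≤ 2 * ε := by
  have h1 : ∀ j, 1 ≤ j → j ≤ N → u' j ≤ u j + ε := by
    intro j hj1 hj2
    have := abs_le.mp (h j hj1 hj2)
    linarith [this.2]
  have h2 : ∀ j, 1 ≤ j → j ≤ N → u j ≤ u' j + ε := by
    intro j hj1 hj2
    have := abs_le.mp (h j hj1 hj2)
    linarith [this.1]
  have e1 := fv_approx hN hap h1 (a m)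
  have e2 := fv_approx hN hap h2 (a m)
  have e3 := fv_approx hN hap h1 (a 1)
  have e4 := fv_approx hN hap h2 (a 1)
  rw [abs_le]
  unfold Ph
  constructor <;> linarith

lemma fix_gen (hN : 1 ≤ N) (hap : IsParam N a p) {w : ℕ → ℕ → ℝ} {L : ℕ → ℝ}
    (hconv : ∀ j, 1 ≤ j → j ≤ N → Tendsto (fun k => w k j) atTop (nhds (L j)))
    (hrec : ∀ k, w (k + 1) = Ph N a p (w k)) :
    ∀ j, 1 ≤ j → j ≤ N → Ph N a p L j = L j := by
  intro j hj1 hjN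
  set eps : ℕ → ℝ := fun k => ∑ m ∈ Finset.Icc 1 N, |w k m - L m| with heps
  have heps_nonneg : ∀ k m, 1 ≤ m → m ≤ N → |w k m - L m| ≤ eps k := by
    intro k m h1 h2
    exact Finset.single_le_sum (f := fun m => |w k m - L m|)
      (fun i _ => abs_nonneg _) (Finset.mem_Icc.mpr ⟨h1, h2⟩)
  have heps0 : Tendsto eps atTop (nhds 0) := by
    have h0 : Tendsto (fun k => ∑ m ∈ Finset.Icc 1 N, |w k m - L m|) atTop
        (nhds (∑ m ∈ Finset.Icc 1 N, |(0:ℝ)|)) := by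
      apply tendsto_finset_sum
      intro m hm
      rw [Finset.mem_Icc] at hm
      have h := (hconv m hm.1 hm.2).sub
        (tendsto_const_nhds : Tendsto (fun _ : ℕ => L m) atTop (nhds (L m)))
      rw [sub_self] at h
      exact h.abs
    rw [heps]
    simpa using h0
  have hbound : ∀ k, |w (k + 1) j - Ph N a p L j| ≤ 2 * eps k := by
    intro k
    rw [hrec k]
    exact Ph_approx hN hap (fun m h1 h2 => heps_nonneg k m h1 h2) hj1 hjN
  have h1 : Tendsto (fun k => w (k + 1) j) atTop (nhds (L j)) :=
    (hconv j hj1 hjN).comp (tendsto_add_atTop_nat 1)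
  have h2 : Tendsto (fun k => w (k + 1) j) atTop (nhds (Ph N a p L j)) := by
    apply tendsto_of_tendsto_of_tendsto_of_le_of_le
      (g := fun k => Ph N a p L j - 2 * eps k) (h := fun k => Ph N a p L j + 2 * eps k)
    · simpa using tendsto_const_nhds.sub (heps0.const_mul 2)
    · simpa using tendsto_const_nhds.add (heps0.const_mul 2)
    · intro k
      show Ph N a p L j - 2 * eps k ≤ w (k + 1) j
      have := abs_le.mp (hbound k)
      linarith [this.1]
    · intro k
      show w (k + 1) j ≤ Ph N a p L j + 2 * eps k
      have := abs_le.mp (hbound k)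
      linarith [this.2]
  exact tendsto_nhds_unique h2 h1

lemma fix_uL (hN : 1 ≤ N) (hap : IsParam N a p) :
    ∀ j, 1 ≤ j → j ≤ N → Ph N a p (uL N a p) j = uL N a p j :=
  fix_gen hN hap (fun j h1 h2 => om_tendsto hN hap h1 h2) (om_succ)

lemma fix_vL (hN : 1 ≤ N) (hap : IsParam N a p) :
    ∀ j, 1 ≤ j → j ≤ N → Ph N a p (vL N a p) j = vL N a p j :=
  fix_gen hN hap (fun j h1 h2 => op_tendsto hN hap h1 h2) (op_succ)

end S5

namespace S5

variable {N : ℕ} {a p : ℕ → ℝ}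

/-! ### identification with iterR -/

lemma fv_zero (hN : 1 ≤ N) (hap : IsParam N a p) {x : ℝ} (hx : 0 ≤ x) :
    fv N p (fun _ => (0:ℝ)) x = x / qq p N := by
  have hSS : ∀ i, SS p (fun _ => (0:ℝ)) i = 0 := by intro i; unfold SS; simp
  have hqN := hq_pos hap hN le_rfl
  apply le_antisymm
  · have h := fv_le (p := p) (u := fun _ => (0:ℝ)) x hN le_rfl
    rw [hSS, add_zero] at h
    exact h
  · apply fv_ge hN
    intro i h1 h2
    rw [hSS, add_zero]
    exact div_le_div_of_nonneg_left hx (hq_pos hap h1 h2) (hq_mono hap h2 le_rfl)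

lemma tinv_yplus (hN : 1 ≤ N) (hap : IsParam N a p) {x : ℝ} (hx : 0 ≤ x) :
    tinv (yplus0 N p) x = x / qq p N := by
  have hqN := hq_pos hap hN le_rfl
  have hinj : Set.InjOn (yplus0 N p) (Set.Ici 0) := by
    intro s _ t _ h
    exact mul_left_cancel₀ hqN.ne' h
  have hmem : x / qq p N ∈ Set.Ici (0:ℝ) := div_nonneg hx hqN.le
  have h1 : yplus0 N p (x / qq p N) = x := mul_div_cancel₀ _ hqN.ne'
  have h3 := hinj.leftInvOn_invFunOn hmem
  rw [h1] at h3
  simpa [tinv] using h3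

lemma iter_minus (hN : 1 ≤ N) (hap : IsParam N a p) :
    ∀ k, iterR N a p (yminus0 N a p) k = Yt N p (om N a p k) := by
  intro k
  induction k with
  | zero => rfl
  | succ n ih =>
    funext t
    have haj : ∀ j, 1 ≤ j → j ≤ N → (0:ℝ) ≤ a j := fun j h1 h2 => (ha_pos hap h1 h2).le
    simp only [iterR, ih]
    rw [om_succ]
    rw [show Yt N p (Ph N a p (om N a p n)) t
      = ∑ j ∈ Finset.Icc 1 N, p j * pos' (t - Ph N a p (om N a p n) j) from rfl]
    apply Finset.sum_congr rfl
    intro j hj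
    rw [Finset.mem_Icc] at hj
    rw [tinv_Yt hN hap (Adm_om hN hap n) (haj j hj.1 hj.2),
      tinv_Yt hN hap (Adm_om hN hap n) (haj 1 le_rfl hN)]
    have harg : t - fv N p (om N a p n) (a j) + fv N p (om N a p n) (a 1)
        = t - Ph N a p (om N a p n) j := by unfold Ph; ring
    rw [harg]

lemma iter_plus (hN : 1 ≤ N) (hap : IsParam N a p) :
    ∀ k, iterR N a p (yplus0 N p) (k + 1) = Yt N p (op N a p (k + 1)) := by
  intro k
  induction k with
  | zero =>
    funext t
    have haj : ∀ j, 1 ≤ j → j ≤ N → (0:ℝ) ≤ a j := fun j h1 h2 => (ha_pos hap h1 h2).le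
    have h0 : iterR N a p (yplus0 N p) 0 = yplus0 N p := rfl
    simp only [iterR, h0]
    rw [op_succ, op_zero]
    rw [show Yt N p (Ph N a p (fun _ => (0:ℝ))) t
      = ∑ j ∈ Finset.Icc 1 N, p j * pos' (t - Ph N a p (fun _ => (0:ℝ)) j) from rfl]
    apply Finset.sum_congr rfl
    intro j hj
    rw [Finset.mem_Icc] at hj
    rw [tinv_yplus hN hap (haj j hj.1 hj.2), tinv_yplus hN hap (haj 1 le_rfl hN)]
    have harg : t - a j / qq p N + a 1 / qq p N = t - Ph N a p (fun _ => (0:ℝ)) j := by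
      unfold Ph
      rw [fv_zero hN hap (haj j hj.1 hj.2), fv_zero hN hap (haj 1 le_rfl hN)]
      ring
    rw [harg]
  | succ n ih =>
    funext t
    have haj : ∀ j, 1 ≤ j → j ≤ N → (0:ℝ) ≤ a j := fun j h1 h2 => (ha_pos hap h1 h2).le
    have hstep : iterR N a p (yplus0 N p) (n + 1 + 1) t
        = ∑ j ∈ Finset.Icc 1 N, p j * pos' (t - tinv (iterR N a p (yplus0 N p) (n + 1)) (a j)
            + tinv (iterR N a p (yplus0 N p) (n + 1)) (a 1)) := rfl
    rw [hstep, ih]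
    rw [op_succ (n + 1)]
    rw [show Yt N p (Ph N a p (op N a p (n + 1))) t
      = ∑ j ∈ Finset.Icc 1 N, p j * pos' (t - Ph N a p (op N a p (n + 1)) j) from rfl]
    apply Finset.sum_congr rfl
    intro j hj
    rw [Finset.mem_Icc] at hj
    rw [tinv_Yt hN hap (Adm_op hN hap (n + 1)) (haj j hj.1 hj.2),
      tinv_Yt hN hap (Adm_op hN hap (n + 1)) (haj 1 le_rfl hN)]
    have harg : t - fv N p (op N a p (n + 1)) (a j) + fv N p (op N a p (n + 1)) (a 1)
        = t - Ph N a p (op N a p (n + 1)) j := by unfold Ph; ring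
    rw [harg]

/-! ### stationarity and convergence -/

lemma Yt_anti (hap : IsParam N a p) {u v : ℕ → ℝ}
    (huv : ∀ j, 1 ≤ j → j ≤ N → u j ≤ v j) (t : ℝ) : Yt N p v t ≤ Yt N p u t := by
  apply Finset.sum_le_sum
  intro j hj
  rw [Finset.mem_Icc] at hj
  apply mul_le_mul_of_nonneg_left _ (hap.2.2 j hj.1 hj.2).le
  exact max_le_max (by have := huv j hj.1 hj.2; linarith) le_rfl

lemma Yt_zero_off (ht : 0 ≤ (t : ℝ)) : Yt N p (fun _ => (0:ℝ)) t = qq p N * t := by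
  unfold Yt qq
  rw [Finset.sum_mul]
  apply Finset.sum_congr rfl
  intro j _
  simp only [pos', sub_zero]
  rw [max_eq_left ht]

lemma stat_of_fixed (hN : 1 ≤ N) (hap : IsParam N a p) {L : ℕ → ℝ} (hL : Adm N L)
    (hfix : ∀ j, 1 ≤ j → j ≤ N → Ph N a p L j = L j) : IsStatTraj N a p (Yt N p L) := by
  refine ⟨Yt_strictMono hN hap hL, ⟨?_, (Yt_strictMono hN hap hL).injOn, ?_⟩, ?_⟩
  · intro t _
    exact Yt_nonneg hap L t
  · intro x hx
    exact ⟨fv N p L x, fv_nonneg hN hap hL hx, Yt_fv hN hap hL hx⟩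
  · intro t _
    have h1 : tinv (Yt N p L) (a 1) = fv N p L (a 1) := tinv_Yt hN hap hL hap.1.le
    rw [show Yt N p L t = ∑ j ∈ Finset.Icc 1 N, p j * pos' (t - L j) from rfl]
    apply Finset.sum_congr rfl
    intro j hj
    rw [Finset.mem_Icc] at hj
    rw [tinv_Yt hN hap hL (ha_pos hap hj.1 hj.2).le, h1]
    have harg : t - fv N p L (a j) + fv N p L (a 1) = t - L j := by
      have h2 := hfix j hj.1 hj.2
      unfold Ph at h2
      linarith
    rw [harg]

lemma Yt_tendsto {w : ℕ → ℕ → ℝ} {L : ℕ → ℝ}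
    (hconv : ∀ j, 1 ≤ j → j ≤ N → Tendsto (fun k => w k j) atTop (nhds (L j))) (t : ℝ) :
    Tendsto (fun k => Yt N p (w k) t) atTop (nhds (Yt N p L t)) := by
  unfold Yt
  apply tendsto_finset_sum
  intro j hj
  rw [Finset.mem_Icc] at hj
  have h1 : Tendsto (fun k => t - w k j) atTop (nhds (t - L j)) :=
    tendsto_const_nhds.sub (hconv j hj.1 hj.2)
  have h2 : Tendsto (fun k => pos' (t - w k j)) atTop (nhds (pos' (t - L j))) := by
    simp only [pos']
    exact h1.max tendsto_const_nhds
  exact h2.const_mul (p j)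

end S5

theorem stmt_5' (N : ℕ) (hN : 1 ≤ N) (a p : ℕ → ℝ) (hap : IsParam N a p) :
    (∀ k : ℕ, ∀ t : ℝ, 0 ≤ t →
        iterR N a p (yminus0 N a p) k t ≤ iterR N a p (yminus0 N a p) (k + 1) t ∧
        iterR N a p (yplus0 N p) (k + 1) t ≤ iterR N a p (yplus0 N p) k t) ∧
    ∃ ym yp : ℝ → ℝ,
      (∀ t : ℝ, 0 ≤ t →
        Filter.Tendsto (fun k => iterR N a p (yminus0 N a p) k t) Filter.atTop (nhds (ym t))) ∧
      (∀ t : ℝ, 0 ≤ t →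
        Filter.Tendsto (fun k => iterR N a p (yplus0 N p) k t) Filter.atTop (nhds (yp t))) ∧
      IsStatTraj N a p ym ∧ IsStatTraj N a p yp := by
  constructor
  · intro k t ht
    constructor
    · rw [S5.iter_minus hN hap k, S5.iter_minus hN hap (k + 1)]
      exact S5.Yt_anti hap (S5.om_step_le hN hap k) t
    · cases k with
      | zero =>
        rw [S5.iter_plus hN hap 0]
        have h0 : iterR N a p (yplus0 N p) 0 = yplus0 N p := rfl
        rw [h0]
        have h1 : S5.Yt N p (S5.op N a p 1) t ≤ S5.Yt N p (fun _ => (0:ℝ)) t := by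
          apply S5.Yt_anti hap
          intro j h1 h2
          have := S5.op_step_le hN hap 0 j h1 h2
          rw [S5.op_zero] at this
          exact this
        rw [S5.Yt_zero_off ht] at h1
        exact h1
      | succ n =>
        rw [S5.iter_plus hN hap n, S5.iter_plus hN hap (n + 1)]
        exact S5.Yt_anti hap (S5.op_step_le hN hap (n + 1)) t
  · refine ⟨S5.Yt N p (S5.uL N a p), S5.Yt N p (S5.vL N a p), ?_, ?_, ?_, ?_⟩
    · intro t _
      have heq : (fun k => iterR N a p (yminus0 N a p) k t)
          = fun k => S5.Yt N p (S5.om N a p k) t :=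
        funext fun k => congrFun (S5.iter_minus hN hap k) t
      rw [heq]
      exact S5.Yt_tendsto (fun j h1 h2 => S5.om_tendsto hN hap h1 h2) t
    · intro t _
      apply Filter.Tendsto.congr'
        (f₁ := fun k => S5.Yt N p (S5.op N a p k) t) ?_
        (S5.Yt_tendsto (fun j h1 h2 => S5.op_tendsto hN hap h1 h2) t)
      rw [Filter.eventuallyEq_iff_exists_mem]
      refine ⟨{k | 1 ≤ k}, Filter.mem_atTop 1, ?_⟩
      intro k hk
      cases k with
      | zero => simp only [Set.mem_setOf_eq] at hk; omega
      | succ n => exact (congrFun (S5.iter_plus hN hap n) t).symm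
    · exact S5.stat_of_fixed hN hap (S5.Adm_uL hN hap) (S5.fix_uL hN hap)
    · exact S5.stat_of_fixed hN hap (S5.Adm_vL hN hap) (S5.fix_vL hN hap)

/-- monotonicity and asymptotics of the bounds, Proposition 3.7. -/
theorem stmt_5 (N : ℕ) (hN : 1 ≤ N) (a p : ℕ → ℝ) (hap : IsParam N a p) :
    (∀ k : ℕ, ∀ t : ℝ, 0 ≤ t →
        iterR N a p (yminus0 N a p) k t ≤ iterR N a p (yminus0 N a p) (k + 1) t ∧
        iterR N a p (yplus0 N p) (k + 1) t ≤ iterR N a p (yplus0 N p) k t) ∧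
    ∃ ym yp : ℝ → ℝ,
      (∀ t : ℝ, 0 ≤ t →
        Filter.Tendsto (fun k => iterR N a p (yminus0 N a p) k t) Filter.atTop (nhds (ym t))) ∧
      (∀ t : ℝ, 0 ≤ t →
        Filter.Tendsto (fun k => iterR N a p (yplus0 N p) k t) Filter.atTop (nhds (yp t))) ∧
      IsStatTraj N a p ym ∧ IsStatTraj N a p yp := by
  exact stmt_5' N hN a p hap
end

section
/- Let N ≥ 2, let (a,p) ∈ P^{2N}, and let s^{(0)}, s^{(1)} ∈ ℝ^N satisfy, with the convention s^{(m)}(0) := 0, 0 < s^{(0)}(i) − s^{(0)}(i−1) ≤ s^{(1)}(i) − s^{(1)}(i−1) for every i ∈ {1,...,N}. For m ∈ {0,1}, define y^{(m)}(t) := Σ_{j=1}^N p_j·(t − s^{(m)}(j) + s^{(m)}(1))_+, let t^{(m)} be the inverse of the increasing bijection y^{(m)}: ℝ_{≥0} → ℝ_{≥0}, and let G^{(m)} be the DC graph on {1,...,N} with edge set {(i,j) ∈ E_N : t^{(m)}(a_i) − s^{(m)}(j) + s^{(m)}(1) > 0}. Then ‖T(G^{(1)})(s^{(1)}) − T(G^{(0)})(s^{(0)})‖_∞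 ≤ (1 − q_1/q_N)·‖s^{(1)} − s^{(0)}‖_∞, where ‖·‖_∞ is the sup norm on ℝ^N. -/
open Filter Topology
open scoped Classical

section Stmt7Aux

private lemma sum_split7 (f : ℕ → ℝ) {K L : ℕ} (h : K ≤ L) :
    ∑ j ∈ Finset.Icc 1 L, f j = (∑ j ∈ Finset.Icc 1 K, f j) + ∑ j ∈ Finset.Ioc K L, f j := by
  have h1 : Finset.Icc 1 L = Finset.Ioc 0 L := by
    ext x; simp only [Finset.mem_Icc, Finset.mem_Ioc]; omega
  have h2 : Finset.Icc 1 K = Finset.Ioc 0 K := by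
    ext x; simp only [Finset.mem_Icc, Finset.mem_Ioc]; omega
  rw [h1, h2]
  exact (Finset.sum_Ioc_consecutive f (Nat.zero_le K) h).symm

private lemma qq_mono7 {N : ℕ} {p : ℕ → ℝ} (hp : ∀ j, 1 ≤ j → j ≤ N → 0 < p j)
    {K L : ℕ} (hKL : K ≤ L) (hLN : L ≤ N) : qq p K ≤ qq p L := by
  unfold qq
  apply Finset.sum_le_sum_of_subset_of_nonneg (Finset.Icc_subset_Icc_right hKL)
  intro j hj _
  have hj' := Finset.mem_Icc.mp hj
  exact (hp j hj'.1 (hj'.2.trans hLN)).le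

private lemma qq_pos7 {N : ℕ} {p : ℕ → ℝ} (hp : ∀ j, 1 ≤ j → j ≤ N → 0 < p j)
    {K : ℕ} (h1 : 1 ≤ K) (hK : K ≤ N) : 0 < qq p K := by
  unfold qq
  apply Finset.sum_pos
  · intro j hj; have hj' := Finset.mem_Icc.mp hj; exact hp j hj'.1 (hj'.2.trans hK)
  · exact ⟨1, Finset.mem_Icc.mpr ⟨le_rfl, h1⟩⟩

private lemma qq_split7 {p : ℕ → ℝ} {K L : ℕ} (h : K ≤ L) :
    qq p L = qq p K + ∑ j ∈ Finset.Ioc K L, p j := by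
  unfold qq; exact sum_split7 p h

private lemma traj_spec7 (N : ℕ) (a p s : ℕ → ℝ) (i : ℕ)
    (hp : ∀ j, 1 ≤ j → j ≤ N → 0 < p j)
    (hs1 : 0 < s 1)
    (hmono : ∀ j k, 1 ≤ j → j ≤ k → k ≤ N → s j ≤ s k)
    (hai : 0 < a i) (hi1 : 1 ≤ i) (hiN : i ≤ N) :
    ∃ (t : ℝ) (J : ℕ),
      tinv (trajOfS N p s) (a i) = t ∧ 0 < t ∧ 1 ≤ J ∧ J ≤ N ∧
      (∀ j, 1 ≤ j → j ≤ N → (s j - s 1 < t ↔ j ≤ J)) ∧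
      qq p J * t = a i + ∑ j ∈ Finset.Icc 1 J, p j * (s j - s 1) ∧
      bG (GrFromS N a p s) i = max i J := by
  have hN1 : 1 ≤ N := hi1.trans hiN
  have hp1 : 0 < p 1 := hp 1 le_rfl hN1
  set y : ℝ → ℝ := trajOfS N p s with hy
  have hyval : ∀ t : ℝ, y t = ∑ j ∈ Finset.Icc 1 N, p j * pos' (t - s j + s 1) := fun _ => rfl
  have hpos'_nonneg : ∀ x : ℝ, 0 ≤ pos' x := fun x => le_max_right x 0
  have hy0 : y 0 = 0 := by
    rw [hyval]
    apply Finset.sum_eq_zero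
    intro j hj
    have hj' := Finset.mem_Icc.mp hj
    have hsj : s 1 ≤ s j := hmono 1 j le_rfl hj'.1 hj'.2
    have hz : pos' (0 - s j + s 1) = 0 := by
      unfold pos'; apply max_eq_right; linarith
    rw [hz, mul_zero]
  have hycont : Continuous y := by
    have hfe : y = fun t => ∑ j ∈ Finset.Icc 1 N, p j * pos' (t - s j + s 1) := funext hyval
    rw [hfe]
    apply continuous_finset_sum
    intro j _
    unfold pos'
    exact continuous_const.mul
      (((continuous_id.sub continuous_const).add continuous_const).max continuous_const)
  set M : ℝ := a i / p 1 + (s N - s 1) with hM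
  have hsN : 0 ≤ s N - s 1 := by have := hmono 1 N le_rfl hN1 le_rfl; linarith
  have hMpos : 0 < a i / p 1 := div_pos hai hp1
  have hM0 : (0:ℝ) ≤ M := by rw [hM]; linarith
  have hyM : a i ≤ y M := by
    rw [hyval]
    have h1mem : 1 ∈ Finset.Icc 1 N := Finset.mem_Icc.mpr ⟨le_rfl, hN1⟩
    have hterm : a i ≤ p 1 * pos' (M - s 1 + s 1) := by
      have hMs : M - s 1 + s 1 = M := by ring
      rw [hMs]
      have h2 : a i / p 1 ≤ pos' M := le_trans (by rw [hM]; linarith) (le_max_left M 0)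
      calc a i = p 1 * (a i / p 1) := by field_simp
        _ ≤ p 1 * pos' M := mul_le_mul_of_nonneg_left h2 hp1.le
    refine hterm.trans (Finset.single_le_sum (f := fun j => p j * pos' (M - s j + s 1)) ?_ h1mem)
    intro j hj
    have hj' := Finset.mem_Icc.mp hj
    exact mul_nonneg (hp j hj'.1 hj'.2).le (hpos'_nonneg _)
  have hIVT : ∃ u ∈ Set.Icc (0:ℝ) M, y u = a i := by
    have hsub := intermediate_value_Icc hM0 hycont.continuousOn
    have hmem : a i ∈ Set.Icc (y 0) (y M) := ⟨by rw [hy0]; exact hai.le, hyM⟩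
    obtain ⟨u, hu, hyu⟩ := hsub hmem
    exact ⟨u, hu, hyu⟩
  obtain ⟨u, hu, hyu⟩ := hIVT
  have hex : ∃ v ∈ Set.Ici (0:ℝ), y v = a i := ⟨u, hu.1, hyu⟩
  set t : ℝ := tinv y (a i) with htdef
  have htmem : t ∈ Set.Ici (0:ℝ) := Function.invFunOn_mem hex
  have hyt : y t = a i := Function.invFunOn_eq hex
  have ht0 : (0:ℝ) ≤ t := htmem
  have htpos : 0 < t := by
    rcases lt_or_eq_of_le ht0 with h | h
    · exact h
    · exfalso; rw [← h, hy0] at hyt; linarith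
  have h1F : 1 ∈ (Finset.Icc 1 N).filter (fun j => s j - s 1 < t) := by
    simp only [Finset.mem_filter, Finset.mem_Icc]
    exact ⟨⟨le_rfl, hN1⟩, by linarith⟩
  set F := (Finset.Icc 1 N).filter (fun j => s j - s 1 < t) with hF
  have hFne : F.Nonempty := ⟨1, h1F⟩
  set J := F.max' hFne with hJ
  have hJF : J ∈ F := F.max'_mem hFne
  have hJ' : ((1 ≤ J ∧ J ≤ N) ∧ s J - s 1 < t) := by
    rw [hF, Finset.mem_filter, Finset.mem_Icc] at hJF
    exact hJF
  have hJ1 : 1 ≤ J := hJ'.1.1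
  have hJN : J ≤ N := hJ'.1.2
  have hiff : ∀ j, 1 ≤ j → j ≤ N → (s j - s 1 < t ↔ j ≤ J) := by
    intro j hj1 hjN
    constructor
    · intro h
      apply F.le_max' j
      rw [hF, Finset.mem_filter, Finset.mem_Icc]
      exact ⟨⟨hj1, hjN⟩, h⟩
    · intro h
      have hsj : s j ≤ s J := hmono j J hj1 h hJN
      linarith [hJ'.2]
  have hkey : qq p J * t = a i + ∑ j ∈ Finset.Icc 1 J, p j * (s j - s 1) := by
    have hsplit := sum_split7 (fun j => p j * pos' (t - s j + s 1)) hJN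
    have hzero : ∑ j ∈ Finset.Ioc J N, p j * pos' (t - s j + s 1) = 0 := by
      apply Finset.sum_eq_zero
      intro j hj
      have hj' := Finset.mem_Ioc.mp hj
      have h1j : 1 ≤ j := by omega
      have hnlt : ¬ (s j - s 1 < t) := by
        rw [hiff j h1j hj'.2]; omega
      push_neg at hnlt
      have hz : pos' (t - s j + s 1) = 0 := by
        unfold pos'; apply max_eq_right; linarith
      rw [hz, mul_zero]
    have hfirst : ∑ j ∈ Finset.Icc 1 J, p j * pos' (t - s j + s 1)
        = qq p J * t - ∑ j ∈ Finset.Icc 1 J, p j * (s j - s 1) := by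
      have hcg : ∀ j ∈ Finset.Icc 1 J, p j * pos' (t - s j + s 1)
          = p j * t - p j * (s j - s 1) := by
        intro j hj
        have hj' := Finset.mem_Icc.mp hj
        have hlt : s j - s 1 < t := (hiff j hj'.1 (hj'.2.trans hJN)).mpr hj'.2
        have hz : pos' (t - s j + s 1) = t - s j + s 1 := by
          unfold pos'; apply max_eq_left; linarith
        rw [hz]; ring
      rw [Finset.sum_congr rfl hcg, Finset.sum_sub_distrib, ← Finset.sum_mul]
      rfl
    have hyt' := hyt
    rw [hyval] at hyt'
    rw [hsplit, hzero, hfirst] at hyt'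
    linarith
  have hbG : bG (GrFromS N a p s) i = max i J := by
    have hi0 : i ≠ 0 := by omega
    unfold bG
    rw [if_neg hi0]
    have hsup_le : ((GrFromS N a p s).filter (fun e => e.1 = i)).sup (fun e => e.2) ≤ J := by
      apply Finset.sup_le
      intro e he
      rw [Finset.mem_filter] at he
      obtain ⟨heE, he1⟩ := he
      unfold GrFromS at heE
      rw [Finset.mem_filter] at heE
      obtain ⟨heEN, hecond⟩ := heE
      unfold ENfin at heEN
      rw [Finset.mem_filter, Finset.mem_product] at heEN
      obtain ⟨⟨hm1, hm2⟩, hm3⟩ := heEN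
      have hm2' := Finset.mem_Icc.mp hm2
      rw [he1] at hecond
      have htv : tinv (trajOfS N p s) (a i) = t := rfl
      rw [htv] at hecond
      exact (hiff e.2 hm2'.1 hm2'.2).mp (by linarith)
    rcases le_or_gt J i with h | h
    · omega
    · have hJsup : J ≤ ((GrFromS N a p s).filter (fun e => e.1 = i)).sup (fun e => e.2) := by
        have hmem : ((i, J) : ℕ × ℕ) ∈ (GrFromS N a p s).filter (fun e => e.1 = i) := by
          rw [Finset.mem_filter]
          refine ⟨?_, rfl⟩
          unfold GrFromS
          rw [Finset.mem_filter]
          constructor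
          · unfold ENfin
            rw [Finset.mem_filter, Finset.mem_product]
            exact ⟨⟨Finset.mem_Icc.mpr ⟨hi1, hiN⟩, Finset.mem_Icc.mpr ⟨hJ1, hJN⟩⟩, h⟩
          · show 0 < tinv (trajOfS N p s) (a i) - s J + s 1
            have htv : tinv (trajOfS N p s) (a i) = t := rfl
            rw [htv]
            linarith [hJ'.2]
        exact Finset.le_sup (f := fun e : ℕ × ℕ => e.2) hmem
      omega
  exact ⟨t, J, rfl, htpos, hJ1, hJN, hiff, hkey, hbG⟩

end Stmt7Aux

set_option maxHeartbeats 1000000 in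
/-- improved contraction across graphs, Lemma 3.10. -/
theorem stmt_7 (N : ℕ) (hN : 2 ≤ N) (a p : ℕ → ℝ) (hap : IsParam N a p)
    (s0 s1 : ℕ → ℝ) (h00 : s0 0 = 0) (h10 : s1 0 = 0)
    (hss : ∀ i, 1 ≤ i → i ≤ N →
      0 < s0 i - s0 (i - 1) ∧ s0 i - s0 (i - 1) ≤ s1 i - s1 (i - 1)) :
    ∀ i, 1 ≤ i → i ≤ N →
      |TG a p (GrFromS N a p s1) s1 i - TG a p (GrFromS N a p s0) s0 i| ≤
        (1 - qq p 1 / qq p N) *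
          (Finset.Icc 1 N).sup' (Finset.nonempty_Icc.mpr (by omega)) (fun j => |s1 j - s0 j|) := by
  obtain ⟨ha1, hastep, hp⟩ := hap
  have hN1 : 1 ≤ N := by omega
  -- positivity of a
  have hapos : ∀ k, 1 ≤ k → k ≤ N → 0 < a k := by
    intro k hk1
    induction k, hk1 using Nat.le_induction with
    | base => intro _; exact ha1
    | succ n hn ih =>
      intro hnN
      have h1 := hastep n hn (by omega)
      have h2 := ih (by omega)
      linarith
  -- step facts for s0, s1
  have hs0step : ∀ k, 1 ≤ k → k ≤ N → s0 (k - 1) < s0 k := by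
    intro k hk hkN; have := (hss k hk hkN).1; linarith
  have hs1step : ∀ k, 1 ≤ k → k ≤ N → s1 (k - 1) < s1 k := by
    intro k hk hkN; have h := hss k hk hkN; linarith [h.1, h.2]
  have hdstep : ∀ k, 1 ≤ k → k ≤ N → s1 (k - 1) - s0 (k - 1) ≤ s1 k - s0 k := by
    intro k hk hkN; have h := hss k hk hkN; linarith [h.2]
  have hs0mono : ∀ j k, 1 ≤ j → j ≤ k → k ≤ N → s0 j ≤ s0 k := by
    intro j k hj1 hjk
    induction k, hjk using Nat.le_induction with
    | base => intro _; exact le_rfl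
    | succ n hn ih =>
      intro hnN
      have h1 := ih (by omega)
      have h2 := hs0step (n + 1) (by omega) hnN
      have h3 : n + 1 - 1 = n := by omega
      rw [h3] at h2
      linarith
  have hs1mono : ∀ j k, 1 ≤ j → j ≤ k → k ≤ N → s1 j ≤ s1 k := by
    intro j k hj1 hjk
    induction k, hjk using Nat.le_induction with
    | base => intro _; exact le_rfl
    | succ n hn ih =>
      intro hnN
      have h1 := ih (by omega)
      have h2 := hs1step (n + 1) (by omega) hnN
      have h3 : n + 1 - 1 = n := by omega
      rw [h3] at h2
      linarith
  have hdmono : ∀ j k, j ≤ k → k ≤ N → s1 j - s0 j ≤ s1 k - s0 k := by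
    intro j k hjk
    induction k, hjk using Nat.le_induction with
    | base => intro _; exact le_rfl
    | succ n hn ih =>
      intro hnN
      have h1 := ih (by omega)
      have h2 := hdstep (n + 1) (by omega) hnN
      have h3 : n + 1 - 1 = n := by omega
      rw [h3] at h2
      linarith
  have hs01 : 0 < s0 1 := by
    have h := (hss 1 le_rfl hN1).1
    have h1 : (1:ℕ) - 1 = 0 := rfl
    rw [h1, h00] at h; linarith
  have hδ1 : 0 ≤ s1 1 - s0 1 := by
    have := hdmono 0 1 (by omega) hN1
    rw [h00, h10] at this; linarith
  have hs11 : 0 < s1 1 := by linarith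
  intro i hi1 hiN
  have hai : 0 < a i := hapos i hi1 hiN
  obtain ⟨t0, J0, htinv0, ht0pos, hJ01, hJ0N, hiff0, hId0, hbG0⟩ :=
    traj_spec7 N a p s0 i hp hs01 hs0mono hai hi1 hiN
  obtain ⟨t1, J1, htinv1, ht1pos, hJ11, hJ1N, hiff1, hId1, hbG1⟩ :=
    traj_spec7 N a p s1 i hp hs11 hs1mono hai hi1 hiN
  -- abbreviations
  set d : ℕ → ℝ := fun j => (s1 j - s1 1) - (s0 j - s0 1) with hd
  have hdj : ∀ j, d j = (s1 j - s1 1) - (s0 j - s0 1) := fun j => rfl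
  set e : ℝ := (s1 N - s0 N) - (s1 1 - s0 1) with he
  set ε : ℝ := s1 N - s0 N with hε
  have hdnn : ∀ j, 1 ≤ j → j ≤ N → 0 ≤ d j := by
    intro j hj1 hjN
    have := hdmono 1 j hj1 hjN
    rw [hdj]; linarith
  have hdle : ∀ j, 1 ≤ j → j ≤ N → d j ≤ e := by
    intro j hj1 hjN
    have := hdmono j N hjN le_rfl
    rw [hdj, he]; linarith
  have hd1 : d 1 = 0 := by rw [hdj]; ring
  have henn : 0 ≤ e := by
    have := hdnn N hN1 le_rfl
    rw [hdj] at this; rw [he]; linarith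
  have hεe : e ≤ ε := by rw [he, hε]; linarith
  have hεnn : 0 ≤ ε := le_trans henn hεe
  have hqNpos : 0 < qq p N := qq_pos7 hp hN1 le_rfl
  have hq1pos : 0 < qq p 1 := qq_pos7 hp le_rfl hN1
  have hq1N : qq p 1 ≤ qq p N := qq_mono7 hp hN1 le_rfl
  set r : ℝ := qq p 1 / qq p N with hr
  have hrq : qq p 1 = r * qq p N := by rw [hr]; field_simp
  have hrpos : 0 < r := div_pos hq1pos hqNpos
  have hr1 : r ≤ 1 := by rw [hr]; exact div_le_one_of_le₀ hq1N hqNpos.le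
  have hqipos : 0 < qq p i := qq_pos7 hp hi1 hiN
  have hqiN : qq p i ≤ qq p N := qq_mono7 hp hiN le_rfl
  have hq1i : qq p 1 ≤ qq p i := qq_mono7 hp hi1 hiN
  have hqJ0pos : 0 < qq p J0 := qq_pos7 hp hJ01 hJ0N
  have hqJ1pos : 0 < qq p J1 := qq_pos7 hp hJ11 hJ1N
  have hqJ0N : qq p J0 ≤ qq p N := qq_mono7 hp hJ0N le_rfl
  have hq1J0 : qq p 1 ≤ qq p J0 := qq_mono7 hp hJ01 hJ0N
  -- relation between the two sigma-sums
  have hS10 : ∀ K : ℕ, (∑ j ∈ Finset.Icc 1 K, p j * (s1 j - s1 1))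
      = (∑ j ∈ Finset.Icc 1 K, p j * (s0 j - s0 1)) + ∑ j ∈ Finset.Icc 1 K, p j * d j := by
    intro K
    rw [← Finset.sum_add_distrib]
    apply Finset.sum_congr rfl
    intro j _
    rw [hdj]; ring
  -- nonnegativity of the d-sums
  have hpdnn : ∀ K : ℕ, K ≤ N → 0 ≤ ∑ j ∈ Finset.Icc 1 K, p j * d j := by
    intro K hKN
    apply Finset.sum_nonneg
    intro j hj
    have hj' := Finset.mem_Icc.mp hj
    exact mul_nonneg (hp j hj'.1 (hj'.2.trans hKN)).le (hdnn j hj'.1 (hj'.2.trans hKN))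
  -- bound on the d-sums
  have hAK : ∀ K, 1 ≤ K → K ≤ N →
      ∑ j ∈ Finset.Icc 1 K, p j * d j ≤ (qq p K - qq p 1) * e := by
    intro K hK1 hKN
    rw [sum_split7 (fun j => p j * d j) hK1]
    have h1 : ∑ j ∈ Finset.Icc 1 1, p j * d j = 0 := by
      rw [Finset.Icc_self, Finset.sum_singleton, hd1, mul_zero]
    have h2 : ∑ j ∈ Finset.Ioc 1 K, p j * d j ≤ ∑ j ∈ Finset.Ioc 1 K, p j * e := by
      apply Finset.sum_le_sum
      intro j hj
      have hj' := Finset.mem_Ioc.mp hj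
      have hj1 : 1 ≤ j := by omega
      have hjN : j ≤ N := hj'.2.trans hKN
      exact mul_le_mul_of_nonneg_left (hdle j hj1 hjN) (hp j hj1 hjN).le
    have h3 : ∑ j ∈ Finset.Ioc 1 K, p j * e = (qq p K - qq p 1) * e := by
      rw [← Finset.sum_mul]
      have h4 : ∑ j ∈ Finset.Ioc 1 K, p j = qq p K - qq p 1 := by
        have := qq_split7 (p := p) hK1; linarith
      rw [h4]
    linarith
  -- the two fundamental estimates on c = t1 - t0
  have hceq : 0 ≤ t1 - t0 ∧ qq p J0 * (t1 - t0) ≤ ∑ j ∈ Finset.Icc 1 J0, p j * d j := by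
    rcases le_total J1 J0 with hJJ | hJJ
    · -- J1 ≤ J0
      have hq := qq_split7 (p := p) hJJ
      have hS0 := sum_split7 (fun j => p j * (s0 j - s0 1)) hJJ
      have hA := sum_split7 (fun j => p j * d j) hJJ
      have hXsum : ∑ j ∈ Finset.Ioc J1 J0, p j * (t0 - (s0 j - s0 1))
          = (qq p J0 - qq p J1) * t0 - ∑ j ∈ Finset.Ioc J1 J0, p j * (s0 j - s0 1) := by
        have h1 : ∀ j ∈ Finset.Ioc J1 J0, p j * (t0 - (s0 j - s0 1))
            = p j * t0 - p j * (s0 j - s0 1) := by intro j _; ring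
        rw [Finset.sum_congr rfl h1, Finset.sum_sub_distrib, ← Finset.sum_mul]
        have h2 : ∑ j ∈ Finset.Ioc J1 J0, p j = qq p J0 - qq p J1 := by linarith
        rw [h2]
      have hkey1 : qq p J1 * (t1 - t0) = (∑ j ∈ Finset.Icc 1 J1, p j * d j)
          + ∑ j ∈ Finset.Ioc J1 J0, p j * (t0 - (s0 j - s0 1)) := by
        linear_combination hId1 - hId0 + hS10 J1 - hS0 - hXsum
      have hXpos : (0:ℝ) ≤ ∑ j ∈ Finset.Ioc J1 J0, p j * (t0 - (s0 j - s0 1)) := by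
        apply Finset.sum_nonneg
        intro j hj
        have hj' := Finset.mem_Ioc.mp hj
        have hj1 : 1 ≤ j := by omega
        have hjN : j ≤ N := hj'.2.trans hJ0N
        have hlt := (hiff0 j hj1 hjN).mpr hj'.2
        exact mul_nonneg (hp j hj1 hjN).le (by linarith)
      have hAnn := hpdnn J1 hJ1N
      have hc0 : 0 ≤ t1 - t0 := by
        have hprod : qq p J1 * 0 ≤ qq p J1 * (t1 - t0) := by
          rw [mul_zero, hkey1]; linarith
        exact le_of_mul_le_mul_left hprod hqJ1pos
      have hXle : ∑ j ∈ Finset.Ioc J1 J0, p j * (t0 - (s0 j - s0 1))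
          ≤ ∑ j ∈ Finset.Ioc J1 J0, p j * (d j - (t1 - t0)) := by
        apply Finset.sum_le_sum
        intro j hj
        have hj' := Finset.mem_Ioc.mp hj
        have hj1 : 1 ≤ j := by omega
        have hjN : j ≤ N := hj'.2.trans hJ0N
        have hσ1 : ¬ (s1 j - s1 1 < t1) := by rw [hiff1 j hj1 hjN]; omega
        push_neg at hσ1
        have hdd := hdj j
        apply mul_le_mul_of_nonneg_left _ (hp j hj1 hjN).le
        linarith
      have hsum2 : ∑ j ∈ Finset.Ioc J1 J0, p j * (d j - (t1 - t0))
          = (∑ j ∈ Finset.Ioc J1 J0, p j * d j) - (qq p J0 - qq p J1) * (t1 - t0) := by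
        have h1 : ∀ j ∈ Finset.Ioc J1 J0, p j * (d j - (t1 - t0))
            = p j * d j - p j * (t1 - t0) := by intro j _; ring
        rw [Finset.sum_congr rfl h1, Finset.sum_sub_distrib, ← Finset.sum_mul]
        have h2 : ∑ j ∈ Finset.Ioc J1 J0, p j = qq p J0 - qq p J1 := by linarith
        rw [h2]
      exact ⟨hc0, by linarith⟩
    · -- J0 ≤ J1
      have hq := qq_split7 (p := p) hJJ
      have hS1 := sum_split7 (fun j => p j * (s1 j - s1 1)) hJJ
      have hYsum : ∑ j ∈ Finset.Ioc J0 J1, p j * ((s1 j - s1 1) - t0)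
          = (∑ j ∈ Finset.Ioc J0 J1, p j * (s1 j - s1 1)) - (qq p J1 - qq p J0) * t0 := by
        have h1 : ∀ j ∈ Finset.Ioc J0 J1, p j * ((s1 j - s1 1) - t0)
            = p j * (s1 j - s1 1) - p j * t0 := by intro j _; ring
        rw [Finset.sum_congr rfl h1, Finset.sum_sub_distrib, ← Finset.sum_mul]
        have h2 : ∑ j ∈ Finset.Ioc J0 J1, p j = qq p J1 - qq p J0 := by linarith
        rw [h2]
      have hkey2 : qq p J1 * (t1 - t0) = (∑ j ∈ Finset.Icc 1 J0, p j * d j)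
          + ∑ j ∈ Finset.Ioc J0 J1, p j * ((s1 j - s1 1) - t0) := by
        linear_combination hId1 - hId0 + hS1 + hS10 J0 - hYsum
      have hYpos : (0:ℝ) ≤ ∑ j ∈ Finset.Ioc J0 J1, p j * ((s1 j - s1 1) - t0) := by
        apply Finset.sum_nonneg
        intro j hj
        have hj' := Finset.mem_Ioc.mp hj
        have hj1 : 1 ≤ j := by omega
        have hjN : j ≤ N := hj'.2.trans hJ1N
        have hσ0 : ¬ (s0 j - s0 1 < t0) := by rw [hiff0 j hj1 hjN]; omega
        push_neg at hσ0
        have hdd := hdj j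
        have hdn := hdnn j hj1 hjN
        exact mul_nonneg (hp j hj1 hjN).le (by linarith)
      have hAnn := hpdnn J0 hJ0N
      have hc0 : 0 ≤ t1 - t0 := by
        have hprod : qq p J1 * 0 ≤ qq p J1 * (t1 - t0) := by
          rw [mul_zero, hkey2]; linarith
        exact le_of_mul_le_mul_left hprod hqJ1pos
      have hYle : ∑ j ∈ Finset.Ioc J0 J1, p j * ((s1 j - s1 1) - t0)
          ≤ ∑ j ∈ Finset.Ioc J0 J1, p j * (t1 - t0) := by
        apply Finset.sum_le_sum
        intro j hj
        have hj' := Finset.mem_Ioc.mp hj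
        have hj1 : 1 ≤ j := by omega
        have hjN : j ≤ N := hj'.2.trans hJ1N
        have hσ1 : s1 j - s1 1 < t1 := (hiff1 j hj1 hjN).mpr hj'.2
        exact mul_le_mul_of_nonneg_left (by linarith) (hp j hj1 hjN).le
      have hsum2 : ∑ j ∈ Finset.Ioc J0 J1, p j * (t1 - t0)
          = (qq p J1 - qq p J0) * (t1 - t0) := by
        rw [← Finset.sum_mul]
        have h2 : ∑ j ∈ Finset.Ioc J0 J1, p j = qq p J1 - qq p J0 := by linarith
        rw [h2]
      exact ⟨hc0, by linarith⟩
  obtain ⟨hc0, hcq⟩ := hceq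
  -- c ≤ (1 - r) e
  have hce : t1 - t0 ≤ (1 - r) * e := by
    have h1 : qq p J0 * (t1 - t0) ≤ (qq p J0 - qq p 1) * e := hcq.trans (hAK J0 hJ01 hJ0N)
    have h2 : (qq p J0 - qq p 1) * e ≤ qq p J0 * ((1 - r) * e) := by
      have h3 : r * qq p J0 * e ≤ r * qq p N * e :=
        mul_le_mul_of_nonneg_right (mul_le_mul_of_nonneg_left hqJ0N hrpos.le) henn
      have hrqe : qq p 1 * e = r * qq p N * e := by rw [hrq]
      linarith only [h3, hrqe]
    exact le_of_mul_le_mul_left (h1.trans h2) hqJ0pos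
  have h1rnn : (0:ℝ) ≤ 1 - r := by linarith
  have h1re : (1 - r) * e ≤ (1 - r) * ε := mul_le_mul_of_nonneg_left hεe h1rnn
  have hcε : t1 - t0 ≤ (1 - r) * ε := hce.trans h1re
  have hRnn : 0 ≤ (1 - r) * ε := mul_nonneg h1rnn hεnn
  -- TG evaluation
  have hT0t : i ≤ J0 → TG a p (GrFromS N a p s0) s0 i = t0 := by
    intro h
    unfold TG
    rw [hbG0, max_eq_right h, ← hId0]
    field_simp
  have hT0S : J0 ≤ i → TG a p (GrFromS N a p s0) s0 i
      = (1 / qq p i) * (a i + ∑ j ∈ Finset.Icc 1 i, p j * (s0 j - s0 1)) := by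
    intro h
    unfold TG
    rw [hbG0, max_eq_left h]
  have hT1t : i ≤ J1 → TG a p (GrFromS N a p s1) s1 i = t1 := by
    intro h
    unfold TG
    rw [hbG1, max_eq_right h, ← hId1]
    field_simp
  have hT1S : J1 ≤ i → TG a p (GrFromS N a p s1) s1 i
      = (1 / qq p i) * (a i + ∑ j ∈ Finset.Icc 1 i, p j * (s1 j - s1 1)) := by
    intro h
    unfold TG
    rw [hbG1, max_eq_left h]
  -- reduce to the ε bound
  have hsup : ε ≤ (Finset.Icc 1 N).sup' (Finset.nonempty_Icc.mpr (by omega))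
      (fun j => |s1 j - s0 j|) := by
    have hNmem : N ∈ Finset.Icc 1 N := Finset.mem_Icc.mpr ⟨hN1, le_rfl⟩
    calc ε = |s1 N - s0 N| := by
          rw [hε, abs_of_nonneg]; rw [← hε]; exact hεnn
      _ ≤ _ := Finset.le_sup' (fun j => |s1 j - s0 j|) hNmem
  suffices hmain : |TG a p (GrFromS N a p s1) s1 i - TG a p (GrFromS N a p s0) s0 i|
      ≤ (1 - r) * ε by
    calc |TG a p (GrFromS N a p s1) s1 i - TG a p (GrFromS N a p s0) s0 i|
        ≤ (1 - r) * ε := hmain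
      _ ≤ (1 - r) * ((Finset.Icc 1 N).sup' (Finset.nonempty_Icc.mpr (by omega))
            (fun j => |s1 j - s0 j|)) := mul_le_mul_of_nonneg_left hsup h1rnn
  rcases le_or_gt J0 i with hJ0i | hiJ0
  · rcases le_or_gt J1 i with hJ1i | hiJ1
    · -- Case B : J0 ≤ i, J1 ≤ i
      rw [hT1S hJ1i, hT0S hJ0i]
      have hkey : (1 / qq p i) * (a i + ∑ j ∈ Finset.Icc 1 i, p j * (s1 j - s1 1))
          - (1 / qq p i) * (a i + ∑ j ∈ Finset.Icc 1 i, p j * (s0 j - s0 1))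
          = (∑ j ∈ Finset.Icc 1 i, p j * d j) / qq p i := by
        rw [hS10 i]
        field_simp
        ring
      rw [hkey, abs_of_nonneg (div_nonneg (hpdnn i hiN) hqipos.le), div_le_iff₀ hqipos]
      have h1 := hAK i hi1 hiN
      have h2 : r * qq p i * e ≤ r * qq p N * e :=
        mul_le_mul_of_nonneg_right (mul_le_mul_of_nonneg_left hqiN hrpos.le) henn
      have h3 : (1 - r) * e * qq p i ≤ (1 - r) * ε * qq p i :=
        mul_le_mul_of_nonneg_right h1re hqipos.le
      have hrqe : qq p 1 * e = r * qq p N * e := by rw [hrq]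
      linarith only [h1, h2, h3, hrqe]
    · -- Case D : J0 ≤ i < J1
      rw [hT1t hiJ1.le, hT0S hJ0i]
      have hsplit0 := sum_split7 (fun j => p j * (s0 j - s0 1)) hJ0i
      have hq := qq_split7 (p := p) hJ0i
      have hval : a i + ∑ j ∈ Finset.Icc 1 i, p j * (s0 j - s0 1)
          = qq p J0 * t0 + ∑ j ∈ Finset.Ioc J0 i, p j * (s0 j - s0 1) := by
        linear_combination hsplit0 - hId0
      have hIoc_p : ∑ j ∈ Finset.Ioc J0 i, p j = qq p i - qq p J0 := by linarith
      have hlo : qq p i * t0 ≤ a i + ∑ j ∈ Finset.Icc 1 i, p j * (s0 j - s0 1) := by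
        rw [hval]
        have h1 : ∑ j ∈ Finset.Ioc J0 i, p j * t0 ≤ ∑ j ∈ Finset.Ioc J0 i, p j * (s0 j - s0 1) := by
          apply Finset.sum_le_sum
          intro j hj
          have hj' := Finset.mem_Ioc.mp hj
          have hj1 : 1 ≤ j := by omega
          have hjN : j ≤ N := hj'.2.trans hiN
          have hσ : ¬ (s0 j - s0 1 < t0) := by rw [hiff0 j hj1 hjN]; omega
          push_neg at hσ
          exact mul_le_mul_of_nonneg_left hσ (hp j hj1 hjN).le
        rw [← Finset.sum_mul, hIoc_p] at h1
        linarith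
      have hhi : a i + ∑ j ∈ Finset.Icc 1 i, p j * (s0 j - s0 1) ≤ qq p i * t1 := by
        rw [hval]
        have h1 : ∑ j ∈ Finset.Ioc J0 i, p j * (s0 j - s0 1) ≤ ∑ j ∈ Finset.Ioc J0 i, p j * t1 := by
          apply Finset.sum_le_sum
          intro j hj
          have hj' := Finset.mem_Ioc.mp hj
          have hj1 : 1 ≤ j := by omega
          have hjN : j ≤ N := hj'.2.trans hiN
          have hσ1 : s1 j - s1 1 < t1 := (hiff1 j hj1 hjN).mpr (by omega)
          have hdn := hdnn j hj1 hjN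
          have hdd := hdj j
          apply mul_le_mul_of_nonneg_left _ (hp j hj1 hjN).le
          linarith
        rw [← Finset.sum_mul, hIoc_p] at h1
        have h2 : qq p J0 * t0 ≤ qq p J0 * t1 := mul_le_mul_of_nonneg_left (by linarith) hqJ0pos.le
        linarith
      have hdivlo : t0 ≤ (1 / qq p i) * (a i + ∑ j ∈ Finset.Icc 1 i, p j * (s0 j - s0 1)) := by
        rw [one_div, inv_mul_eq_div, le_div_iff₀ hqipos]
        linarith
      have hdivhi : (1 / qq p i) * (a i + ∑ j ∈ Finset.Icc 1 i, p j * (s0 j - s0 1)) ≤ t1 := by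
        rw [one_div, inv_mul_eq_div, div_le_iff₀ hqipos]
        linarith
      rw [abs_of_nonneg (sub_nonneg.mpr hdivhi)]
      exact le_trans (sub_le_sub_left hdivlo t1) hcε
  · rcases le_or_gt J1 i with hJ1i | hiJ1
    · -- Case C : J1 ≤ i < J0 (hard case)
      rw [hT1S hJ1i, hT0t hiJ0.le]
      have hsplit1 := sum_split7 (fun j => p j * (s1 j - s1 1)) hJ1i
      have hq1i' := qq_split7 (p := p) hJ1i
      have hIoc_p1 : ∑ j ∈ Finset.Ioc J1 i, p j = qq p i - qq p J1 := by linarith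
      have hvalX : a i + ∑ j ∈ Finset.Icc 1 i, p j * (s1 j - s1 1)
          = qq p J1 * t1 + ∑ j ∈ Finset.Ioc J1 i, p j * (s1 j - s1 1) := by
        linear_combination hsplit1 - hId1
      -- lower bound : t0 ≤ T1
      have hlo : qq p i * t0 ≤ a i + ∑ j ∈ Finset.Icc 1 i, p j * (s1 j - s1 1) := by
        rw [hvalX]
        have h1 : ∑ j ∈ Finset.Ioc J1 i, p j * t1 ≤ ∑ j ∈ Finset.Ioc J1 i, p j * (s1 j - s1 1) := by
          apply Finset.sum_le_sum
          intro j hj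
          have hj' := Finset.mem_Ioc.mp hj
          have hj1 : 1 ≤ j := by omega
          have hjN : j ≤ N := hj'.2.trans hiN
          have hσ : ¬ (s1 j - s1 1 < t1) := by rw [hiff1 j hj1 hjN]; omega
          push_neg at hσ
          exact mul_le_mul_of_nonneg_left hσ (hp j hj1 hjN).le
        rw [← Finset.sum_mul, hIoc_p1] at h1
        have h2 : qq p J1 * t0 ≤ qq p J1 * t1 :=
          mul_le_mul_of_nonneg_left (by linarith only [hc0]) hqJ1pos.le
        have hm : 0 * (qq p i - qq p J1) ≤ (t1 - t0) * (qq p i - qq p J1) :=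
          mul_le_mul_of_nonneg_right hc0 (sub_nonneg.mpr (qq_mono7 hp hJ1i hiN))
        linarith only [h1, h2, hm]
      have hdivlo : t0 ≤ (1 / qq p i) * (a i + ∑ j ∈ Finset.Icc 1 i, p j * (s1 j - s1 1)) := by
        rw [one_div, inv_mul_eq_div, le_div_iff₀ hqipos]
        linarith
      have hi1N : i + 1 ≤ N := by omega
      have hu' : s0 (i + 1) - s0 1 < t0 := (hiff0 (i + 1) (by omega) hi1N).mpr (by omega)
      set u : ℝ := t0 - (s0 (i + 1) - s0 1) with hudef
      have hupos : 0 ≤ u := by rw [hudef]; linarith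
      -- the final bound, multiplied by qq p i
      have hfinal : (a i + ∑ j ∈ Finset.Icc 1 i, p j * (s1 j - s1 1)) - qq p i * t0
          ≤ qq p i * ((1 - r) * ε) := by
        have htarget : qq p i * ((1 - r) * e) ≤ qq p i * ((1 - r) * ε) :=
          mul_le_mul_of_nonneg_left h1re hqipos.le
        rcases le_total u (r * e) with huθ | hθu
        · -- small u : use the J0-identity
          have hsplit0 := sum_split7 (fun j => p j * (s0 j - s0 1)) hiJ0.le
          have hq0 := qq_split7 (p := p) hiJ0.le
          have hIoc_p0 : ∑ j ∈ Finset.Ioc i J0, p j = qq p J0 - qq p i := by linarith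
          have hYsum : ∑ j ∈ Finset.Ioc i J0, p j * (t0 - (s0 j - s0 1))
              = (qq p J0 - qq p i) * t0 - ∑ j ∈ Finset.Ioc i J0, p j * (s0 j - s0 1) := by
            have h1 : ∀ j ∈ Finset.Ioc i J0, p j * (t0 - (s0 j - s0 1))
                = p j * t0 - p j * (s0 j - s0 1) := by intro j _; ring
            rw [Finset.sum_congr rfl h1, Finset.sum_sub_distrib, ← Finset.sum_mul, hIoc_p0]
          have hkeyC2 : (a i + ∑ j ∈ Finset.Icc 1 i, p j * (s1 j - s1 1)) - qq p i * t0
              = (∑ j ∈ Finset.Icc 1 i, p j * d j)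
                + ∑ j ∈ Finset.Ioc i J0, p j * (t0 - (s0 j - s0 1)) := by
            linear_combination hS10 i - hId0 - hsplit0 - hYsum
          rw [hkeyC2]
          have hY1 : ∑ j ∈ Finset.Ioc i J0, p j * (t0 - (s0 j - s0 1))
              ≤ ∑ j ∈ Finset.Ioc i J0, p j * u := by
            apply Finset.sum_le_sum
            intro j hj
            have hj' := Finset.mem_Ioc.mp hj
            have hj1 : 1 ≤ j := by omega
            have hjN : j ≤ N := hj'.2.trans hJ0N
            have hmm : s0 (i + 1) ≤ s0 j := hs0mono (i + 1) j (by omega) (by omega) hjN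
            apply mul_le_mul_of_nonneg_left _ (hp j hj1 hjN).le
            rw [hudef]; linarith
          rw [← Finset.sum_mul, hIoc_p0] at hY1
          have hA := hAK i hi1 hiN
          have h4 : (qq p J0 - qq p i) * u ≤ (qq p N - qq p i) * (r * e) := by
            have h5 : (qq p J0 - qq p i) * u ≤ (qq p N - qq p i) * u :=
              mul_le_mul_of_nonneg_right (by linarith) hupos
            have h6 : (qq p N - qq p i) * u ≤ (qq p N - qq p i) * (r * e) :=
              mul_le_mul_of_nonneg_left huθ (by linarith)
            linarith
          have h7 : (qq p i - qq p 1) * e + (qq p N - qq p i) * (r * e)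
              = qq p i * ((1 - r) * e) := by
            rw [hrq]; ring
          linarith only [hY1, hA, h4, h7, htarget]
        · -- large u : use the J1-identity
          rw [hvalX]
          have hY1 : ∑ j ∈ Finset.Ioc J1 i, p j * (s1 j - s1 1)
              ≤ ∑ j ∈ Finset.Ioc J1 i, p j * (t0 + (1 - r) * e) := by
            apply Finset.sum_le_sum
            intro j hj
            have hj' := Finset.mem_Ioc.mp hj
            have hj1 : 1 ≤ j := by omega
            have hjN : j ≤ N := hj'.2.trans hiN
            have hmm : s0 j ≤ s0 (i + 1) := hs0mono j (i + 1) hj1 (by omega) hi1N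
            have hdd := hdj j
            have hdl := hdle j hj1 hjN
            apply mul_le_mul_of_nonneg_left _ (hp j hj1 hjN).le
            -- s1 j - s1 1 = (s0 j - s0 1) + d j ≤ (t0 - u) + e ≤ t0 + (1 - r) e
            rw [hudef] at hθu
            linarith
          rw [← Finset.sum_mul, hIoc_p1] at hY1
          have h2 : qq p J1 * t1 ≤ qq p J1 * (t0 + (1 - r) * e) :=
            mul_le_mul_of_nonneg_left (by linarith) hqJ1pos.le
          have hqJ1i : qq p J1 ≤ qq p i := qq_mono7 hp hJ1i hiN
          linarith only [hY1, h2, htarget]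
      rw [abs_of_nonneg (by linarith)]
      have hgoal : qq p i * ((1 / qq p i) * (a i + ∑ j ∈ Finset.Icc 1 i, p j * (s1 j - s1 1)) - t0)
          ≤ qq p i * ((1 - r) * ε) := by
        have hid : qq p i * ((1 / qq p i) * (a i + ∑ j ∈ Finset.Icc 1 i, p j * (s1 j - s1 1)) - t0)
            = (a i + ∑ j ∈ Finset.Icc 1 i, p j * (s1 j - s1 1)) - qq p i * t0 := by
          field_simp
        rw [hid]
        exact hfinal
      exact le_of_mul_le_mul_left hgoal hqipos
    · -- Case A : i < J0, i < J1
      rw [hT1t hiJ1.le, hT0t hiJ0.le]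
      rw [abs_of_nonneg hc0]
      exact hcε
end
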